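/- Let 𝒮 = {T_1,…,T_m} be a finite collection of piecewise C² uniformly expanding maps of [0,1]: for each T ∈ 𝒮 there is a finite partition 𝒜_T of [0,1] into intervals such that on each I ∈ 𝒜_T, T restricted to I extends to a strictly monotone C² function on the closure of I, and λ := min_{T∈𝒮} min_{I∈𝒜_T} inf_{x∈Ī} |T'(x)| > 1. For ω ∈ {1,…,m}^ℤ write T_ω^n := T_{ω_{n−1}} ∘ ⋯ ∘ T_{ω_0}, and let m denote Lebesgue measure on [0,1]. Then there exists C > 0 such that for all ω, all n ≥ 1 and all ε > 0: m({ x ∈ [0,1] : |T_ω^n(x) − x| ≤ ε }) ≤ C ε. -/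

import Mathlib

open MeasureTheory Filter Set Topology

noncomputable section

/-- The two-sided shift space on `m` symbols. -/
abbrev Om (m : ℕ) := ℤ → Fin m

/-- Lebesgue measure on `[0,1]`. -/
def mLeb : Measure ℝ := volume.restrict (Set.Icc 0 1)

/-- `T` is a piecewise `C²` uniformly expanding map of `[0,1]` with expansion constant `lam`:
there is a finite partition `0 = a_0 < a_1 < ⋯ < a_N = 1` of `[0,1]` into intervals such
that on each piece `T` agrees with a strictly monotone `C²` function on the closed piece,
whose derivative is at least `lam` in absolute value. -/
def PiecewiseC2Expanding (T : ℝ → ℝ) (lam : ℝ) : Prop :=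
  ∃ (N : ℕ) (a : ℕ → ℝ), 1 ≤ N ∧ a 0 = 0 ∧ a N = 1 ∧ (∀ i < N, a i < a (i + 1)) ∧
    ∀ i < N, ∃ g : ℝ → ℝ,
      ContDiffOn ℝ 2 g (Set.Icc (a i) (a (i + 1))) ∧
      Set.EqOn T g (Set.Ioo (a i) (a (i + 1))) ∧
      (StrictMonoOn g (Set.Icc (a i) (a (i + 1))) ∨
        StrictAntiOn g (Set.Icc (a i) (a (i + 1)))) ∧
      ∀ x ∈ Set.Icc (a i) (a (i + 1)),
        lam ≤ |derivWithin g (Set.Icc (a i) (a (i + 1))) x|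

/-- The random composition `T_ω^n = T_{ω_{n−1}} ∘ ⋯ ∘ T_{ω_0}`. -/
def randComp {m : ℕ} (T : Fin m → ℝ → ℝ) (ω : Om m) : ℕ → ℝ → ℝ
  | 0 => fun x => x
  | n + 1 => fun x => T (ω (n : ℤ)) (randComp T ω n x)



/-- An open, order-connected, bounded, nonempty subset of ℝ is an open interval. -/
theorem open_ordConn_eq_Ioo {C : Set ℝ} (hC : IsOpen C) (hne : C.Nonempty)
    (hord : C.OrdConnected) (hbdd : BddAbove C) (hbdb : BddBelow C) :
    C = Set.Ioo (sInf C) (sSup C) ∧ sInf C < sSup C := by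
  have h1 : C ⊆ Set.Ioo (sInf C) (sSup C) := by
    intro x hx
    rcases Metric.isOpen_iff.1 hC x hx with ⟨ε, hε, hball⟩
    have hx1 : x - ε / 2 ∈ C := by
      apply hball
      simp [Real.dist_eq]
      rw [abs_of_pos hε]; linarith
    have hx2 : x + ε / 2 ∈ C := by
      apply hball
      simp [Real.dist_eq]
      rw [abs_of_pos hε]; linarith
    constructor
    · calc sInf C ≤ x - ε/2 := csInf_le hbdb hx1
        _ < x := by linarith
    · calc x < x + ε/2 := by linarith
        _ ≤ sSup C := le_csSup hbdd hx2
  have h2 : Set.Ioo (sInf C) (sSup C) ⊆ C := by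
    intro z hz
    obtain ⟨x, hxC, hxz⟩ : ∃ x ∈ C, x < z := by
      by_contra h
      push_neg at h
      have : z ≤ sInf C := le_csInf hne h
      linarith [hz.1]
    obtain ⟨y, hyC, hzy⟩ : ∃ y ∈ C, z < y := by
      by_contra h
      push_neg at h
      have : sSup C ≤ z := csSup_le hne h
      linarith [hz.2]
    exact hord.out hxC hyC ⟨le_of_lt hxz, le_of_lt hzy⟩
  refine ⟨le_antisymm h1 h2, ?_⟩
  obtain ⟨x, hx⟩ := hne
  have := h1 hx
  exact lt_trans this.1 this.2

/-- Data of a piecewise expanding system for a map `F`. -/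
structure PES (F : ℝ → ℝ) : Type 1 where
  ι : Type
  pc : Finset ι
  u : ι → ℝ
  v : ι → ℝ
  g : ι → ℝ → ℝ
  d : ι → ℝ → ℝ
  t : ι → ℝ
  Lam : ℝ
  Dd : ℝ
  del : ℝ
  I : ℝ
  hLam : 1 < Lam
  hDd0 : 0 ≤ Dd
  hdel : 0 < del
  huv : ∀ i ∈ pc, u i < v i
  hsub : ∀ i ∈ pc, 0 ≤ u i ∧ v i ≤ 1
  hdisj : ∀ i ∈ pc, ∀ j ∈ pc, i ≠ j → Disjoint (Set.Ioo (u i) (v i)) (Set.Ioo (u j) (v j))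
  hcov : (Set.Icc (0:ℝ) 1 \ ⋃ i ∈ pc, Set.Ioo (u i) (v i)).Finite
  heq : ∀ i ∈ pc, Set.EqOn F (g i) (Set.Ioo (u i) (v i))
  hgc : ∀ i ∈ pc, ContinuousOn (g i) (Set.Icc (u i) (v i))
  hd : ∀ i ∈ pc, ∀ x ∈ Set.Ioo (u i) (v i), HasDerivAt (g i) (d i x) x
  hsign : ∀ i ∈ pc, (∀ x ∈ Set.Ioo (u i) (v i), Lam ≤ d i x) ∨
      (∀ x ∈ Set.Ioo (u i) (v i), d i x ≤ -Lam)
  hdist : ∀ i ∈ pc, ∀ x ∈ Set.Ioo (u i) (v i), ∀ y ∈ Set.Ioo (u i) (v i),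
      |Real.log (abs (d i x)) - Real.log (abs (d i y))| ≤ Dd * |g i x - g i y|
  himg : ∀ i ∈ pc, ∀ x ∈ Set.Icc (u i) (v i), g i x ∈ Set.Icc (0:ℝ) 1
  hdelimg : ∀ i ∈ pc, del ≤ |g i (v i) - g i (u i)|
  ht : ∀ i ∈ pc, ∀ x ∈ Set.Ioo (u i) (v i), 1 / |d i x| ≤ t i
  ht0 : ∀ i ∈ pc, 0 ≤ t i
  hI : ∑ i ∈ pc, t i ≤ I

namespace PES

variable {F : ℝ → ℝ} (X : PES F)

theorem Lam_pos : (0:ℝ) < X.Lam := lt_trans one_pos X.hLam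

theorem d_ne_zero {i : X.ι} (hi : i ∈ X.pc) {x : ℝ} (hx : x ∈ Set.Ioo (X.u i) (X.v i)) :
    X.Lam ≤ |X.d i x| := by
  rcases X.hsign i hi with h | h
  · have := h x hx; rw [abs_of_pos (lt_of_lt_of_le X.Lam_pos this)]; exact this
  · have := h x hx
    have hneg : X.d i x < 0 := lt_of_le_of_lt this (by linarith [X.Lam_pos])
    rw [abs_of_neg hneg]; linarith

/-- Mean value expansion estimate on a subinterval of a piece. -/
theorem expand {i : X.ι} (hi : i ∈ X.pc) {a b : ℝ}
    (hab : a < b) (ha : a ∈ Set.Icc (X.u i) (X.v i)) (hb : b ∈ Set.Icc (X.u i) (X.v i)) :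
    X.Lam * (b - a) ≤ |X.g i b - X.g i a| := by
  have hIccsub : Set.Icc a b ⊆ Set.Icc (X.u i) (X.v i) := Set.Icc_subset_Icc ha.1 hb.2
  have hIoosub : Set.Ioo a b ⊆ Set.Ioo (X.u i) (X.v i) :=
    Set.Ioo_subset_Ioo (ha.1) (hb.2)
  obtain ⟨c, hc, hslope⟩ := exists_hasDerivAt_eq_slope (X.g i) (X.d i) hab
    ((X.hgc i hi).mono hIccsub) (fun x hx => X.hd i hi x (hIoosub hx))
  have habs : X.Lam ≤ |X.d i c| := X.d_ne_zero hi (hIoosub hc)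
  rw [eq_div_iff (by linarith : b - a ≠ 0)] at hslope
  have : |X.g i b - X.g i a| = |X.d i c| * (b - a) := by
    rw [← hslope, abs_mul, abs_of_pos (by linarith : (0:ℝ) < b - a)]
  rw [this]
  nlinarith [sub_pos.mpr hab]

theorem expand_abs {i : X.ι} (hi : i ∈ X.pc) {a b : ℝ}
    (ha : a ∈ Set.Icc (X.u i) (X.v i)) (hb : b ∈ Set.Icc (X.u i) (X.v i)) :
    X.Lam * |b - a| ≤ |X.g i b - X.g i a| := by
  rcases lt_trichotomy a b with h | h | h
  · rw [abs_of_pos (by linarith : (0:ℝ) < b - a)]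
    exact X.expand hi h ha hb
  · simp [h]
  · rw [abs_of_neg (by linarith : b - a < 0), abs_sub_comm]
    have := X.expand hi h hb ha
    linarith [this]

theorem strictMono_or_anti {i : X.ι} (hi : i ∈ X.pc) :
    StrictMonoOn (X.g i) (Set.Icc (X.u i) (X.v i)) ∨
    StrictAntiOn (X.g i) (Set.Icc (X.u i) (X.v i)) := by
  rcases X.hsign i hi with h | h
  · left
    apply strictMonoOn_of_deriv_pos (convex_Icc _ _) (X.hgc i hi)
    intro x hx
    rw [interior_Icc] at hx
    rw [(X.hd i hi x hx).deriv]
    linarith [h x hx, X.Lam_pos]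
  · right
    apply strictAntiOn_of_deriv_neg (convex_Icc _ _) (X.hgc i hi)
    intro x hx
    rw [interior_Icc] at hx
    rw [(X.hd i hi x hx).deriv]
    linarith [h x hx, X.Lam_pos]

theorem injOn {i : X.ι} (hi : i ∈ X.pc) : Set.InjOn (X.g i) (Set.Icc (X.u i) (X.v i)) := by
  rcases X.strictMono_or_anti hi with h | h
  · exact h.injOn
  · exact h.injOn

theorem pc_nonempty : X.pc.Nonempty := by
  by_contra h
  rw [Finset.not_nonempty_iff_eq_empty] at h
  have : (Set.Icc (0:ℝ) 1 \ ⋃ i ∈ X.pc, Set.Ioo (X.u i) (X.v i)) = Set.Icc 0 1 := by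
    rw [h]; simp
  have hfin := X.hcov
  rw [this] at hfin
  exact (Set.Icc.infinite (by norm_num)).not_finite hfin

/-- Bound on the measure of near-fixed points of `F`, per piece and summed. -/
theorem bad_bound {lam ε : ℝ} (hlam : 1 < lam) (hL : lam ≤ X.Lam) (hε : 0 < ε) :
    volume.restrict (Set.Icc (0:ℝ) 1) {x | |F x - x| ≤ ε} ≤
      ENNReal.ofReal (2 * lam / (lam - 1) * X.I * ε) := by
  classical
  set c : X.ι → ℝ := fun i => 2 * lam / (lam - 1) * X.t i * ε with hc
  have hfac : 0 < 2 * lam / (lam - 1) := by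
    apply div_pos <;> linarith
  have hc0 : ∀ i ∈ X.pc, 0 ≤ c i := fun i hi => by
    have := X.ht0 i hi
    positivity
  set B : X.ι → Set ℝ := fun i => {x ∈ Set.Ioo (X.u i) (X.v i) | |F x - x| ≤ ε} with hB
  -- per-piece diameter bound
  have key : ∀ i ∈ X.pc, ∀ x ∈ B i, ∀ y ∈ B i, x - y ≤ c i := by
    intro i hi x hx y hy
    rcases le_or_gt x y with h | h
    · linarith [hc0 i hi]
    · -- y < x, use MVT for g - id on [y, x]
      have hIccsub : Set.Icc y x ⊆ Set.Icc (X.u i) (X.v i) :=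
        Set.Icc_subset_Icc (le_of_lt hy.1.1) (le_of_lt hx.1.2)
      have hIoosub : Set.Ioo y x ⊆ Set.Ioo (X.u i) (X.v i) :=
        Set.Ioo_subset_Ioo (le_of_lt hy.1.1) (le_of_lt hx.1.2)
      obtain ⟨ξ, hξ, hslope⟩ := exists_hasDerivAt_eq_slope (fun z => X.g i z - z)
        (fun z => X.d i z - 1) h
        (((X.hgc i hi).mono hIccsub).sub continuousOn_id)
        (fun z hz => ((X.hd i hi z (hIoosub hz))).sub (hasDerivAt_id z))
      have hξ' := hIoosub hξ
      have habs : lam ≤ |X.d i ξ| := le_trans hL (X.d_ne_zero hi hξ')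
      have ht := X.ht i hi ξ hξ'
      have hdpos : (0:ℝ) < |X.d i ξ| := by linarith
      have hgx : X.g i x = F x := (X.heq i hi hx.1).symm
      have hgy : X.g i y = F y := (X.heq i hi hy.1).symm
      have hnum : |(X.g i x - x) - (X.g i y - y)| ≤ 2 * ε := by
        rw [hgx, hgy]
        have h1 := hx.2
        have h2 := hy.2
        rw [abs_le] at h1 h2 ⊢
        constructor <;> linarith [h1.1, h1.2, h2.1, h2.2]
      rw [eq_div_iff (by linarith : x - y ≠ 0)] at hslope
      have hlow : |X.d i ξ| * (1 - 1/lam) ≤ |X.d i ξ - 1| := by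
        have h1 : |X.d i ξ| - 1 ≤ |X.d i ξ - 1| := by
          have := abs_sub_abs_le_abs_sub (X.d i ξ) 1
          simpa using this
        have : |X.d i ξ| * (1 - 1/lam) ≤ |X.d i ξ| - 1 := by
          have hlam0 : (0:ℝ) < lam := by linarith
          rw [mul_sub, mul_one]
          have : 1 ≤ |X.d i ξ| * (1/lam) := by
            rw [mul_one_div, le_div_iff₀ hlam0]; linarith
          linarith
        linarith
      have hineq : (x - y) * (|X.d i ξ| * (1 - 1/lam)) ≤ 2 * ε := by
        calc (x - y) * (|X.d i ξ| * (1 - 1/lam)) ≤ (x - y) * |X.d i ξ - 1| := by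
              apply mul_le_mul_of_nonneg_left hlow (by linarith)
          _ = |(X.d i ξ - 1) * (x - y)| := by
              rw [abs_mul, abs_of_pos (by linarith : (0:ℝ) < x - y)]; ring
          _ = |(X.g i x - x) - (X.g i y - y)| := by rw [hslope]
          _ ≤ 2 * ε := hnum
      -- conclude x - y ≤ c i
      have h1l : (0:ℝ) < 1 - 1/lam := by
        have : 1/lam < 1 := by rw [div_lt_one (by linarith)]; linarith
        linarith
      have hti : 1 / |X.d i ξ| ≤ X.t i := ht
      have hxy : x - y ≤ 2 * ε / (|X.d i ξ| * (1 - 1/lam)) := by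
        rw [le_div_iff₀ (by positivity)]
        linarith
      have hone : 1 ≤ X.t i * |X.d i ξ| := by
        have := (div_le_iff₀ hdpos).1 hti
        linarith
      have hlamne : lam ≠ 0 := by linarith
      have hlam1ne : lam - 1 ≠ 0 := by linarith
      have h2 : 2 * lam / (lam - 1) * X.t i * ε * (|X.d i ξ| * (1 - 1/lam)) =
          2 * (X.t i * |X.d i ξ|) * ε := by field_simp
      calc x - y ≤ 2 * ε / (|X.d i ξ| * (1 - 1/lam)) := hxy
        _ ≤ c i := by
            rw [hc, div_le_iff₀ (by positivity)]
            rw [h2]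
            nlinarith [hone, hε]
  -- measure of each B i
  have hBmeas : ∀ i ∈ X.pc, volume (B i) ≤ ENNReal.ofReal (c i) := by
    intro i hi
    rcases Set.eq_empty_or_nonempty (B i) with he | hne
    · rw [he]; simp
    · have hbdd : BddAbove (B i) := ⟨X.v i, fun x hx => le_of_lt hx.1.2⟩
      have hbdb : BddBelow (B i) := ⟨X.u i, fun x hx => le_of_lt hx.1.1⟩
      have hsub : B i ⊆ Set.Icc (sInf (B i)) (sSup (B i)) :=
        fun x hx => ⟨csInf_le hbdb hx, le_csSup hbdd hx⟩
      have hlen : sSup (B i) - sInf (B i) ≤ c i := by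
        have h1 : sSup (B i) ≤ c i + sInf (B i) := by
          apply csSup_le hne
          intro x hx
          have : x - c i ≤ sInf (B i) := by
            apply le_csInf hne
            intro y hy
            linarith [key i hi x hx y hy]
          linarith
        linarith
      calc volume (B i) ≤ volume (Set.Icc (sInf (B i)) (sSup (B i))) := measure_mono hsub
        _ = ENNReal.ofReal (sSup (B i) - sInf (B i)) := Real.volume_Icc
        _ ≤ ENNReal.ofReal (c i) := ENNReal.ofReal_le_ofReal hlen
  -- assemble
  have hcover : {x | |F x - x| ≤ ε} ∩ Set.Icc 0 1 ⊆
      (Set.Icc (0:ℝ) 1 \ ⋃ i ∈ X.pc, Set.Ioo (X.u i) (X.v i)) ∪ ⋃ i ∈ X.pc, B i := by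
    intro x hx
    by_cases hmem : x ∈ ⋃ i ∈ X.pc, Set.Ioo (X.u i) (X.v i)
    · right
      rcases Set.mem_iUnion₂.1 hmem with ⟨i, hi, hxi⟩
      exact Set.mem_iUnion₂.2 ⟨i, hi, hxi, hx.1⟩
    · left; exact ⟨hx.2, hmem⟩
  rw [Measure.restrict_apply' measurableSet_Icc]
  calc volume ({x | |F x - x| ≤ ε} ∩ Set.Icc 0 1)
      ≤ volume ((Set.Icc (0:ℝ) 1 \ ⋃ i ∈ X.pc, Set.Ioo (X.u i) (X.v i)) ∪ ⋃ i ∈ X.pc, B i) :=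
        measure_mono hcover
    _ ≤ volume (Set.Icc (0:ℝ) 1 \ ⋃ i ∈ X.pc, Set.Ioo (X.u i) (X.v i)) +
        volume (⋃ i ∈ X.pc, B i) := measure_union_le _ _
    _ = volume (⋃ i ∈ X.pc, B i) := by
        rw [X.hcov.measure_zero, zero_add]
    _ ≤ ∑ i ∈ X.pc, volume (B i) := measure_biUnion_finset_le _ _
    _ ≤ ∑ i ∈ X.pc, ENNReal.ofReal (c i) := Finset.sum_le_sum hBmeas
    _ = ENNReal.ofReal (∑ i ∈ X.pc, c i) := by
        rw [ENNReal.ofReal_sum_of_nonneg hc0]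
    _ ≤ ENNReal.ofReal (2 * lam / (lam - 1) * X.I * ε) := by
        apply ENNReal.ofReal_le_ofReal
        have : ∑ i ∈ X.pc, c i = 2 * lam / (lam - 1) * ε * (∑ i ∈ X.pc, X.t i) := by
          rw [Finset.mul_sum]
          apply Finset.sum_congr rfl
          intro i _
          rw [hc]; ring
        rw [this]
        have hsum : ∑ i ∈ X.pc, X.t i ≤ X.I := X.hI
        have : 2 * lam / (lam - 1) * ε * (∑ i ∈ X.pc, X.t i) ≤
            2 * lam / (lam - 1) * ε * X.I := by
          apply mul_le_mul_of_nonneg_left hsum (by positivity)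
        linarith

end PES

namespace PES

attribute [local instance] Classical.propDecidable

variable {F S : ℝ → ℝ} (X : PES F) (Y : PES S)

/-- Child piece set. -/
def CC (p : X.ι × Y.ι) : Set ℝ :=
  Set.Ioo (X.u p.1) (X.v p.1) ∩ (X.g p.1) ⁻¹' (Set.Ioo (Y.u p.2) (Y.v p.2))

def cpc : Finset (X.ι × Y.ι) := (X.pc ×ˢ Y.pc).filter (fun p => (CC X Y p).Nonempty)

def cu (p : X.ι × Y.ι) : ℝ := sInf (CC X Y p)
def cv (p : X.ι × Y.ι) : ℝ := sSup (CC X Y p)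
def cg (p : X.ι × Y.ι) : ℝ → ℝ := fun x => Y.g p.2 (X.g p.1 x)
def cd (p : X.ι × Y.ι) : ℝ → ℝ := fun x => Y.d p.2 (X.g p.1 x) * X.d p.1 x

/-- Left/right ends of the image of a parent piece. -/
def gl (i : X.ι) : ℝ := min (X.g i (X.u i)) (X.g i (X.v i))
def gr (i : X.ι) : ℝ := max (X.g i (X.u i)) (X.g i (X.v i))

/-- A child is full if the `Y`-branch is contained in the image of the parent piece. -/
def cfull (p : X.ι × Y.ι) : Prop := gl X p.1 ≤ Y.u p.2 ∧ Y.v p.2 ≤ gr X p.1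

def cDd : ℝ := Y.Dd + X.Dd / Y.Lam

def ct (p : X.ι × Y.ι) : ℝ :=
  if cfull X Y p then Real.exp (cDd X Y) * (cv X Y p - cu X Y p) / Y.del
  else X.t p.1 / Y.Lam

lemma mem_cpc {p : X.ι × Y.ι} (hp : p ∈ cpc X Y) :
    p.1 ∈ X.pc ∧ p.2 ∈ Y.pc ∧ (CC X Y p).Nonempty := by
  simp only [cpc, Finset.mem_filter, Finset.mem_product] at hp
  exact ⟨hp.1.1, hp.1.2, hp.2⟩

/-- The child piece is the open interval `(cu, cv)`. -/
lemma CC_eq_Ioo {p : X.ι × Y.ι} (hp : p ∈ cpc X Y) :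
    CC X Y p = Set.Ioo (cu X Y p) (cv X Y p) ∧ cu X Y p < cv X Y p := by
  obtain ⟨h1, h2, hne⟩ := mem_cpc X Y hp
  have hopen : IsOpen (CC X Y p) := by
    apply ContinuousOn.isOpen_inter_preimage
      ((X.hgc p.1 h1).mono Set.Ioo_subset_Icc_self) isOpen_Ioo isOpen_Ioo
  have hord : (CC X Y p).OrdConnected := by
    constructor
    intro x hx y hy z hz
    have hxI : x ∈ Set.Ioo (X.u p.1) (X.v p.1) := hx.1
    have hyI : y ∈ Set.Ioo (X.u p.1) (X.v p.1) := hy.1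
    have hzI : z ∈ Set.Ioo (X.u p.1) (X.v p.1) :=
      ⟨lt_of_lt_of_le hxI.1 hz.1, lt_of_le_of_lt hz.2 hyI.2⟩
    refine ⟨hzI, ?_⟩
    have hxc : X.g p.1 x ∈ Set.Ioo (Y.u p.2) (Y.v p.2) := hx.2
    have hyc : X.g p.1 y ∈ Set.Ioo (Y.u p.2) (Y.v p.2) := hy.2
    have hxIcc : x ∈ Set.Icc (X.u p.1) (X.v p.1) := Set.Ioo_subset_Icc_self hxI
    have hyIcc : y ∈ Set.Icc (X.u p.1) (X.v p.1) := Set.Ioo_subset_Icc_self hyI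
    have hzIcc : z ∈ Set.Icc (X.u p.1) (X.v p.1) := Set.Ioo_subset_Icc_self hzI
    rcases X.strictMono_or_anti h1 with hm | hm
    · constructor
      · calc Y.u p.2 < X.g p.1 x := hxc.1
          _ ≤ X.g p.1 z := hm.monotoneOn hxIcc hzIcc hz.1
      · calc X.g p.1 z ≤ X.g p.1 y := hm.monotoneOn hzIcc hyIcc hz.2
          _ < Y.v p.2 := hyc.2
    · constructor
      · calc Y.u p.2 < X.g p.1 y := hyc.1
          _ ≤ X.g p.1 z := hm.antitoneOn hzIcc hyIcc hz.2
      · calc X.g p.1 z ≤ X.g p.1 x := hm.antitoneOn hxIcc hzIcc hz.1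
          _ < Y.v p.2 := hxc.2
  have hbdd : BddAbove (CC X Y p) := ⟨X.v p.1, fun x hx => le_of_lt hx.1.2⟩
  have hbdb : BddBelow (CC X Y p) := ⟨X.u p.1, fun x hx => le_of_lt hx.1.1⟩
  exact open_ordConn_eq_Ioo hopen hne hord hbdd hbdb

lemma cuv_sub {p : X.ι × Y.ι} (hp : p ∈ cpc X Y) :
    Set.Icc (cu X Y p) (cv X Y p) ⊆ Set.Icc (X.u p.1) (X.v p.1) := by
  obtain ⟨h1, h2, hne⟩ := mem_cpc X Y hp
  have hbdb : BddBelow (CC X Y p) := ⟨X.u p.1, fun x hx => le_of_lt hx.1.1⟩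
  have hbdd : BddAbove (CC X Y p) := ⟨X.v p.1, fun x hx => le_of_lt hx.1.2⟩
  apply Set.Icc_subset_Icc
  · exact le_csInf hne (fun x hx => le_of_lt hx.1.1)
  · exact csSup_le hne (fun x hx => le_of_lt hx.1.2)

lemma cmap_Ioo {p : X.ι × Y.ι} (hp : p ∈ cpc X Y) :
    ∀ x ∈ Set.Ioo (cu X Y p) (cv X Y p), X.g p.1 x ∈ Set.Ioo (Y.u p.2) (Y.v p.2) := by
  intro x hx
  rw [← (CC_eq_Ioo X Y hp).1] at hx
  exact hx.2

lemma cmap_mem_Ioo_parent {p : X.ι × Y.ι} (hp : p ∈ cpc X Y) :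
    ∀ x ∈ Set.Ioo (cu X Y p) (cv X Y p), x ∈ Set.Ioo (X.u p.1) (X.v p.1) := by
  intro x hx
  rw [← (CC_eq_Ioo X Y hp).1] at hx
  exact hx.1

lemma cmap_Icc {p : X.ι × Y.ι} (hp : p ∈ cpc X Y) :
    ∀ x ∈ Set.Icc (cu X Y p) (cv X Y p), X.g p.1 x ∈ Set.Icc (Y.u p.2) (Y.v p.2) := by
  obtain ⟨h1, h2, hne⟩ := mem_cpc X Y hp
  obtain ⟨hCeq, hlt⟩ := CC_eq_Ioo X Y hp
  -- endpoints via closure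
  have hend : ∀ w ∈ ({cu X Y p, cv X Y p} : Set ℝ), X.g p.1 w ∈ Set.Icc (Y.u p.2) (Y.v p.2) := by
    intro w hw
    have hwIcc' : w ∈ Set.Icc (cu X Y p) (cv X Y p) := by
      rcases hw with h | h <;> rw [h]
      · exact ⟨le_refl _, le_of_lt hlt⟩
      · exact ⟨le_of_lt hlt, le_refl _⟩
    have hwc : w ∈ closure (Set.Ioo (cu X Y p) (cv X Y p)) := by
      rw [closure_Ioo (ne_of_lt hlt)]
      exact hwIcc'
    have hwIcc : w ∈ Set.Icc (X.u p.1) (X.v p.1) := cuv_sub X Y hp hwIcc'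
    have hcw : ContinuousWithinAt (X.g p.1) (Set.Ioo (cu X Y p) (cv X Y p)) w := by
      apply (X.hgc p.1 h1 w hwIcc).mono
      exact subset_trans Set.Ioo_subset_Icc_self (cuv_sub X Y hp)
    have := hcw.mem_closure_image hwc
    have himg : X.g p.1 '' (Set.Ioo (cu X Y p) (cv X Y p)) ⊆ Set.Ioo (Y.u p.2) (Y.v p.2) := by
      rintro _ ⟨x, hx, rfl⟩
      exact cmap_Ioo X Y hp x hx
    have h2' : closure (X.g p.1 '' (Set.Ioo (cu X Y p) (cv X Y p))) ⊆
        Set.Icc (Y.u p.2) (Y.v p.2) := by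
      apply closure_minimal (subset_trans himg Set.Ioo_subset_Icc_self) isClosed_Icc
    exact h2' this
  intro x hx
  rcases eq_or_lt_of_le hx.1 with h | h
  · exact hend _ (Or.inl h.symm)
  rcases eq_or_lt_of_le hx.2 with h' | h'
  · exact hend _ (Or.inr h')
  · exact Set.Ioo_subset_Icc_self (cmap_Ioo X Y hp x ⟨h, h'⟩)

def cLam : ℝ := X.Lam * Y.Lam

lemma cd_hasDeriv {p : X.ι × Y.ι} (hp : p ∈ cpc X Y) :
    ∀ x ∈ Set.Ioo (cu X Y p) (cv X Y p), HasDerivAt (cg X Y p) (cd X Y p x) x := by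
  obtain ⟨h1, h2, hne⟩ := mem_cpc X Y hp
  intro x hx
  have hx1 := cmap_mem_Ioo_parent X Y hp x hx
  have hx2 := cmap_Ioo X Y hp x hx
  have hX := X.hd p.1 h1 x hx1
  have hY := Y.hd p.2 h2 _ hx2
  exact hY.comp x hX

lemma cd_abs {p : X.ι × Y.ι} (hp : p ∈ cpc X Y) :
    ∀ x ∈ Set.Ioo (cu X Y p) (cv X Y p), X.Lam * Y.Lam ≤ |cd X Y p x| := by
  obtain ⟨h1, h2, hne⟩ := mem_cpc X Y hp
  intro x hx
  have hx1 := cmap_mem_Ioo_parent X Y hp x hx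
  have hx2 := cmap_Ioo X Y hp x hx
  have hX := X.d_ne_zero h1 hx1
  have hY := Y.d_ne_zero h2 hx2
  rw [cd, abs_mul]
  calc X.Lam * Y.Lam ≤ |X.d p.1 x| * Y.Lam := by
        apply mul_le_mul_of_nonneg_right hX (le_of_lt Y.Lam_pos)
    _ ≤ |X.d p.1 x| * |Y.d p.2 (X.g p.1 x)| := by
        apply mul_le_mul_of_nonneg_left hY (abs_nonneg _)
    _ = |Y.d p.2 (X.g p.1 x)| * |X.d p.1 x| := by ring

lemma cd_sign {p : X.ι × Y.ι} (hp : p ∈ cpc X Y) :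
    (∀ x ∈ Set.Ioo (cu X Y p) (cv X Y p), cLam X Y ≤ cd X Y p x) ∨
    (∀ x ∈ Set.Ioo (cu X Y p) (cv X Y p), cd X Y p x ≤ -cLam X Y) := by
  obtain ⟨h1, h2, hne⟩ := mem_cpc X Y hp
  have hXp := X.Lam_pos
  have hYp := Y.Lam_pos
  rcases X.hsign p.1 h1 with hx | hx <;> rcases Y.hsign p.2 h2 with hy | hy
  · left; intro x h
    have a1 := hx x (cmap_mem_Ioo_parent X Y hp x h)
    have a2 := hy _ (cmap_Ioo X Y hp x h)
    rw [cd, cLam]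
    nlinarith [mul_le_mul a2 a1 (le_of_lt hXp) (by linarith : (0:ℝ) ≤ Y.d p.2 (X.g p.1 x))]
  · right; intro x h
    have a1 := hx x (cmap_mem_Ioo_parent X Y hp x h)
    have a2 := hy _ (cmap_Ioo X Y hp x h)
    rw [cd, cLam]
    nlinarith [mul_le_mul (by linarith : Y.Lam ≤ -Y.d p.2 (X.g p.1 x)) a1 (le_of_lt hXp)
      (by linarith : (0:ℝ) ≤ -Y.d p.2 (X.g p.1 x))]
  · right; intro x h
    have a1 := hx x (cmap_mem_Ioo_parent X Y hp x h)
    have a2 := hy _ (cmap_Ioo X Y hp x h)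
    rw [cd, cLam]
    nlinarith [mul_le_mul a2 (by linarith : X.Lam ≤ -X.d p.1 x) (le_of_lt hXp)
      (by linarith : (0:ℝ) ≤ Y.d p.2 (X.g p.1 x))]
  · left; intro x h
    have a1 := hx x (cmap_mem_Ioo_parent X Y hp x h)
    have a2 := hy _ (cmap_Ioo X Y hp x h)
    rw [cd, cLam]
    nlinarith [mul_le_mul (by linarith : Y.Lam ≤ -Y.d p.2 (X.g p.1 x))
      (by linarith : X.Lam ≤ -X.d p.1 x) (le_of_lt hXp)
      (by linarith : (0:ℝ) ≤ -Y.d p.2 (X.g p.1 x))]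

lemma cd_dist {p : X.ι × Y.ι} (hp : p ∈ cpc X Y) :
    ∀ x ∈ Set.Ioo (cu X Y p) (cv X Y p), ∀ y ∈ Set.Ioo (cu X Y p) (cv X Y p),
    |Real.log (abs (cd X Y p x)) - Real.log (abs (cd X Y p y))| ≤
      cDd X Y * |cg X Y p x - cg X Y p y| := by
  obtain ⟨h1, h2, hne⟩ := mem_cpc X Y hp
  intro x hx y hy
  have hx1 := cmap_mem_Ioo_parent X Y hp x hx
  have hx2 := cmap_Ioo X Y hp x hx
  have hy1 := cmap_mem_Ioo_parent X Y hp y hy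
  have hy2 := cmap_Ioo X Y hp y hy
  have hXx := X.d_ne_zero h1 hx1
  have hXy := X.d_ne_zero h1 hy1
  have hYx := Y.d_ne_zero h2 hx2
  have hYy := Y.d_ne_zero h2 hy2
  have hXp := X.Lam_pos
  have hYp := Y.Lam_pos
  have hax : (0:ℝ) < |Y.d p.2 (X.g p.1 x)| := lt_of_lt_of_le hYp hYx
  have hbx : (0:ℝ) < |X.d p.1 x| := lt_of_lt_of_le hXp hXx
  have hay : (0:ℝ) < |Y.d p.2 (X.g p.1 y)| := lt_of_lt_of_le hYp hYy
  have hby : (0:ℝ) < |X.d p.1 y| := lt_of_lt_of_le hXp hXy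
  have l1 : Real.log (abs (cd X Y p x)) =
      Real.log (abs (Y.d p.2 (X.g p.1 x))) + Real.log (abs (X.d p.1 x)) := by
    rw [cd, abs_mul, Real.log_mul hax.ne' hbx.ne']
  have l2 : Real.log (abs (cd X Y p y)) =
      Real.log (abs (Y.d p.2 (X.g p.1 y))) + Real.log (abs (X.d p.1 y)) := by
    rw [cd, abs_mul, Real.log_mul hay.ne' hby.ne']
  have dY := Y.hdist p.2 h2 _ hx2 _ hy2
  have dX := X.hdist p.1 h1 x hx1 y hy1
  have hexp : Y.Lam * |X.g p.1 x - X.g p.1 y| ≤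
      |Y.g p.2 (X.g p.1 x) - Y.g p.2 (X.g p.1 y)| := by
    have := Y.expand_abs h2 (Set.Ioo_subset_Icc_self hy2) (Set.Ioo_subset_Icc_self hx2)
    exact this
  have hcg : cg X Y p x - cg X Y p y = Y.g p.2 (X.g p.1 x) - Y.g p.2 (X.g p.1 y) := rfl
  have htri : |Real.log (abs (cd X Y p x)) - Real.log (abs (cd X Y p y))| ≤
      |Real.log (abs (Y.d p.2 (X.g p.1 x))) - Real.log (abs (Y.d p.2 (X.g p.1 y)))| +
      |Real.log (abs (X.d p.1 x)) - Real.log (abs (X.d p.1 y))| := by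
    rw [l1, l2]
    have : Real.log (abs (Y.d p.2 (X.g p.1 x))) + Real.log (abs (X.d p.1 x)) -
        (Real.log (abs (Y.d p.2 (X.g p.1 y))) + Real.log (abs (X.d p.1 y))) =
        (Real.log (abs (Y.d p.2 (X.g p.1 x))) - Real.log (abs (Y.d p.2 (X.g p.1 y)))) +
        (Real.log (abs (X.d p.1 x)) - Real.log (abs (X.d p.1 y))) := by ring
    rw [this]
    exact abs_add_le _ _
  have hgle : |X.g p.1 x - X.g p.1 y| ≤ |cg X Y p x - cg X Y p y| / Y.Lam := by
    rw [le_div_iff₀ hYp, hcg]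
    linarith [hexp]
  have hDd0 := X.hDd0
  calc |Real.log (abs (cd X Y p x)) - Real.log (abs (cd X Y p y))|
      ≤ |Real.log (abs (Y.d p.2 (X.g p.1 x))) - Real.log (abs (Y.d p.2 (X.g p.1 y)))| +
        |Real.log (abs (X.d p.1 x)) - Real.log (abs (X.d p.1 y))| := htri
    _ ≤ Y.Dd * |Y.g p.2 (X.g p.1 x) - Y.g p.2 (X.g p.1 y)| + X.Dd * |X.g p.1 x - X.g p.1 y| := by
        apply add_le_add dY dX
    _ ≤ Y.Dd * |cg X Y p x - cg X Y p y| +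
        X.Dd * (|cg X Y p x - cg X Y p y| / Y.Lam) := by
        rw [hcg]
        apply add_le_add (le_refl _)
        exact mul_le_mul_of_nonneg_left (by rw [hcg] at hgle; exact hgle) hDd0
    _ = cDd X Y * |cg X Y p x - cg X Y p y| := by
        rw [cDd]
        field_simp

lemma ccont {p : X.ι × Y.ι} (hp : p ∈ cpc X Y) :
    ContinuousOn (cg X Y p) (Set.Icc (cu X Y p) (cv X Y p)) := by
  obtain ⟨h1, h2, hne⟩ := mem_cpc X Y hp
  have : cg X Y p = (Y.g p.2) ∘ (X.g p.1) := rfl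
  rw [this]
  apply ContinuousOn.comp (Y.hgc p.2 h2) ((X.hgc p.1 h1).mono (cuv_sub X Y hp))
  intro x hx
  exact cmap_Icc X Y hp x hx

lemma cimg {p : X.ι × Y.ι} (hp : p ∈ cpc X Y) :
    ∀ x ∈ Set.Icc (cu X Y p) (cv X Y p), cg X Y p x ∈ Set.Icc (0:ℝ) 1 := by
  obtain ⟨h1, h2, hne⟩ := mem_cpc X Y hp
  intro x hx
  exact Y.himg p.2 h2 _ (cmap_Icc X Y hp x hx)

lemma clen_pos {p : X.ι × Y.ι} (hp : p ∈ cpc X Y) :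
    cLam X Y * (cv X Y p - cu X Y p) ≤ |cg X Y p (cv X Y p) - cg X Y p (cu X Y p)| := by
  have hlt := (CC_eq_Ioo X Y hp).2
  obtain ⟨ξ, hξ, hslope⟩ := exists_hasDerivAt_eq_slope (cg X Y p) (cd X Y p) hlt
    (ccont X Y hp) (cd_hasDeriv X Y hp)
  rw [eq_div_iff (by linarith : cv X Y p - cu X Y p ≠ 0)] at hslope
  have habs := cd_abs X Y hp ξ hξ
  have : |cg X Y p (cv X Y p) - cg X Y p (cu X Y p)| =
      |cd X Y p ξ| * (cv X Y p - cu X Y p) := by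
    rw [← hslope, abs_mul, abs_of_pos (by linarith : (0:ℝ) < cv X Y p - cu X Y p)]
  rw [this, cLam]
  nlinarith [sub_pos.mpr hlt]

lemma cfull_endpoints {p : X.ι × Y.ι} (hp : p ∈ cpc X Y) (hf : cfull X Y p) :
    (X.g p.1 (cu X Y p) = Y.u p.2 ∧ X.g p.1 (cv X Y p) = Y.v p.2) ∨
    (X.g p.1 (cu X Y p) = Y.v p.2 ∧ X.g p.1 (cv X Y p) = Y.u p.2) := by
  obtain ⟨h1, h2, hne⟩ := mem_cpc X Y hp
  obtain ⟨hCeq, hlt⟩ := CC_eq_Ioo X Y hp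
  have huv := X.huv p.1 h1
  have hYuv := Y.huv p.2 h2
  have huIcc : X.u p.1 ∈ Set.Icc (X.u p.1) (X.v p.1) := ⟨le_refl _, le_of_lt huv⟩
  have hvIcc : X.v p.1 ∈ Set.Icc (X.u p.1) (X.v p.1) := ⟨le_of_lt huv, le_refl _⟩
  have hcuIcc' : cu X Y p ∈ Set.Icc (cu X Y p) (cv X Y p) := ⟨le_refl _, le_of_lt hlt⟩
  have hcvIcc' : cv X Y p ∈ Set.Icc (cu X Y p) (cv X Y p) := ⟨le_of_lt hlt, le_refl _⟩
  have hcuIcc : cu X Y p ∈ Set.Icc (X.u p.1) (X.v p.1) := cuv_sub X Y hp hcuIcc'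
  have hcvIcc : cv X Y p ∈ Set.Icc (X.u p.1) (X.v p.1) := cuv_sub X Y hp hcvIcc'
  have hgcu : X.g p.1 (cu X Y p) ∈ Set.Icc (Y.u p.2) (Y.v p.2) := cmap_Icc X Y hp _ hcuIcc'
  have hgcv : X.g p.1 (cv X Y p) ∈ Set.Icc (Y.u p.2) (Y.v p.2) := cmap_Icc X Y hp _ hcvIcc'
  have hbdb : BddBelow (CC X Y p) := ⟨X.u p.1, fun z hz => le_of_lt hz.1.1⟩
  have hbdd : BddAbove (CC X Y p) := ⟨X.v p.1, fun z hz => le_of_lt hz.1.2⟩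
  rcases X.strictMono_or_anti h1 with hm | hm
  · -- monotone case
    have hguv : X.g p.1 (X.u p.1) < X.g p.1 (X.v p.1) := hm huIcc hvIcc huv
    have hfl : X.g p.1 (X.u p.1) ≤ Y.u p.2 := by
      have := hf.1
      rw [gl, min_eq_left (le_of_lt hguv)] at this
      exact this
    have hfr : Y.v p.2 ≤ X.g p.1 (X.v p.1) := by
      have := hf.2
      rw [gr, max_eq_right (le_of_lt hguv)] at this
      exact this
    left
    constructor
    · by_contra hne'
      have hlt' : Y.u p.2 < X.g p.1 (cu X Y p) := lt_of_le_of_ne hgcu.1 (Ne.symm hne')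
      set w := (Y.u p.2 + X.g p.1 (cu X Y p)) / 2 with hw
      have hw1 : Y.u p.2 < w := by rw [hw]; linarith
      have hw2 : w < X.g p.1 (cu X Y p) := by rw [hw]; linarith
      have hwmem : w ∈ Set.Ioo (X.g p.1 (X.u p.1)) (X.g p.1 (X.v p.1)) := by
        constructor
        · linarith
        · have : X.g p.1 (cu X Y p) ≤ X.g p.1 (X.v p.1) :=
            hm.monotoneOn hcuIcc hvIcc hcuIcc.2
          linarith
      obtain ⟨x, hxIoo, hgx⟩ := intermediate_value_Ioo (le_of_lt huv) (X.hgc p.1 h1) hwmem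
      have hxCC : x ∈ CC X Y p := by
        refine ⟨hxIoo, ?_⟩
        simp only [Set.mem_preimage, hgx]
        exact ⟨hw1, by linarith [hgcu.2]⟩
      have hxcu : cu X Y p ≤ x := csInf_le hbdb hxCC
      have : X.g p.1 (cu X Y p) ≤ X.g p.1 x :=
        hm.monotoneOn hcuIcc (Set.Ioo_subset_Icc_self hxIoo) hxcu
      rw [hgx] at this
      linarith
    · by_contra hne'
      have hlt' : X.g p.1 (cv X Y p) < Y.v p.2 := lt_of_le_of_ne hgcv.2 hne'
      set w := (X.g p.1 (cv X Y p) + Y.v p.2) / 2 with hw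
      have hw1 : X.g p.1 (cv X Y p) < w := by rw [hw]; linarith
      have hw2 : w < Y.v p.2 := by rw [hw]; linarith
      have hwmem : w ∈ Set.Ioo (X.g p.1 (X.u p.1)) (X.g p.1 (X.v p.1)) := by
        constructor
        · linarith [hgcv.1]
        · linarith
      obtain ⟨x, hxIoo, hgx⟩ := intermediate_value_Ioo (le_of_lt huv) (X.hgc p.1 h1) hwmem
      have hxCC : x ∈ CC X Y p := by
        refine ⟨hxIoo, ?_⟩
        simp only [Set.mem_preimage, hgx]
        exact ⟨by linarith [hgcv.1], hw2⟩
      have hxcv : x ≤ cv X Y p := le_csSup hbdd hxCC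
      have : X.g p.1 x ≤ X.g p.1 (cv X Y p) :=
        hm.monotoneOn (Set.Ioo_subset_Icc_self hxIoo) hcvIcc hxcv
      rw [hgx] at this
      linarith
  · -- antitone case
    have hguv : X.g p.1 (X.v p.1) < X.g p.1 (X.u p.1) := hm huIcc hvIcc huv
    have hfl : X.g p.1 (X.v p.1) ≤ Y.u p.2 := by
      have := hf.1
      rw [gl, min_eq_right (le_of_lt hguv)] at this
      exact this
    have hfr : Y.v p.2 ≤ X.g p.1 (X.u p.1) := by
      have := hf.2
      rw [gr, max_eq_left (le_of_lt hguv)] at this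
      exact this
    right
    constructor
    · by_contra hne'
      have hlt' : X.g p.1 (cu X Y p) < Y.v p.2 := lt_of_le_of_ne hgcu.2 hne'
      set w := (X.g p.1 (cu X Y p) + Y.v p.2) / 2 with hw
      have hw1 : X.g p.1 (cu X Y p) < w := by rw [hw]; linarith
      have hw2 : w < Y.v p.2 := by rw [hw]; linarith
      have hwmem : w ∈ Set.Ioo (X.g p.1 (X.v p.1)) (X.g p.1 (X.u p.1)) := by
        constructor
        · linarith [hgcu.1]
        · linarith
      obtain ⟨x, hxIoo, hgx⟩ := intermediate_value_Ioo' (le_of_lt huv) (X.hgc p.1 h1) hwmem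
      have hxCC : x ∈ CC X Y p := by
        refine ⟨hxIoo, ?_⟩
        simp only [Set.mem_preimage, hgx]
        exact ⟨by linarith [hgcu.1], hw2⟩
      have hxcu : cu X Y p ≤ x := csInf_le hbdb hxCC
      have : X.g p.1 x ≤ X.g p.1 (cu X Y p) :=
        hm.antitoneOn hcuIcc (Set.Ioo_subset_Icc_self hxIoo) hxcu
      rw [hgx] at this
      linarith
    · by_contra hne'
      have hlt' : Y.u p.2 < X.g p.1 (cv X Y p) := lt_of_le_of_ne hgcv.1 (Ne.symm hne')
      set w := (Y.u p.2 + X.g p.1 (cv X Y p)) / 2 with hw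
      have hw1 : Y.u p.2 < w := by rw [hw]; linarith
      have hw2 : w < X.g p.1 (cv X Y p) := by rw [hw]; linarith
      have hwmem : w ∈ Set.Ioo (X.g p.1 (X.v p.1)) (X.g p.1 (X.u p.1)) := by
        constructor
        · linarith
        · linarith [hgcv.2]
      obtain ⟨x, hxIoo, hgx⟩ := intermediate_value_Ioo' (le_of_lt huv) (X.hgc p.1 h1) hwmem
      have hxCC : x ∈ CC X Y p := by
        refine ⟨hxIoo, ?_⟩
        simp only [Set.mem_preimage, hgx]
        exact ⟨hw1, by linarith [hgcv.2]⟩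
      have hxcv : x ≤ cv X Y p := le_csSup hbdd hxCC
      have : X.g p.1 (cv X Y p) ≤ X.g p.1 x :=
        hm.antitoneOn (Set.Ioo_subset_Icc_self hxIoo) hcvIcc hxcv
      rw [hgx] at this
      linarith

lemma cfull_del {p : X.ι × Y.ι} (hp : p ∈ cpc X Y) (hf : cfull X Y p) :
    Y.del ≤ |cg X Y p (cv X Y p) - cg X Y p (cu X Y p)| := by
  obtain ⟨h1, h2, hne⟩ := mem_cpc X Y hp
  have hdel := Y.hdelimg p.2 h2
  rcases cfull_endpoints X Y hp hf with ⟨e1, e2⟩ | ⟨e1, e2⟩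
  · show Y.del ≤ |Y.g p.2 (X.g p.1 (cv X Y p)) - Y.g p.2 (X.g p.1 (cu X Y p))|
    rw [e1, e2]
    exact hdel
  · show Y.del ≤ |Y.g p.2 (X.g p.1 (cv X Y p)) - Y.g p.2 (X.g p.1 (cu X Y p))|
    rw [e1, e2, abs_sub_comm]
    exact hdel

lemma partial_mem {p : X.ι × Y.ι} (hp : p ∈ cpc X Y) (hnf : ¬ cfull X Y p) :
    gl X p.1 ∈ Set.Ioo (Y.u p.2) (Y.v p.2) ∨ gr X p.1 ∈ Set.Ioo (Y.u p.2) (Y.v p.2) := by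
  obtain ⟨h1, h2, hne⟩ := mem_cpc X Y hp
  obtain ⟨x, hx⟩ := hne
  have huv := X.huv p.1 h1
  have hxI := hx.1
  have hgx := hx.2
  have hgx' : X.g p.1 x ∈ Set.Ioo (Y.u p.2) (Y.v p.2) := hgx
  have huIcc : X.u p.1 ∈ Set.Icc (X.u p.1) (X.v p.1) := ⟨le_refl _, le_of_lt huv⟩
  have hvIcc : X.v p.1 ∈ Set.Icc (X.u p.1) (X.v p.1) := ⟨le_of_lt huv, le_refl _⟩
  have hxIcc : x ∈ Set.Icc (X.u p.1) (X.v p.1) := Set.Ioo_subset_Icc_self hxI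
  have hbet : gl X p.1 < X.g p.1 x ∧ X.g p.1 x < gr X p.1 := by
    rcases X.strictMono_or_anti h1 with hm | hm
    · have h1' := hm huIcc hxIcc hxI.1
      have h2' := hm hxIcc hvIcc hxI.2
      have hguv : X.g p.1 (X.u p.1) < X.g p.1 (X.v p.1) := hm huIcc hvIcc huv
      rw [gl, min_eq_left (le_of_lt hguv), gr, max_eq_right (le_of_lt hguv)]
      exact ⟨h1', h2'⟩
    · have h1' := hm huIcc hxIcc hxI.1
      have h2' := hm hxIcc hvIcc hxI.2
      have hguv : X.g p.1 (X.v p.1) < X.g p.1 (X.u p.1) := hm huIcc hvIcc huv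
      rw [gl, min_eq_right (le_of_lt hguv), gr, max_eq_left (le_of_lt hguv)]
      exact ⟨h2', h1'⟩
  rw [cfull] at hnf
  push_neg at hnf
  by_cases hc : gl X p.1 ≤ Y.u p.2
  · right
    have := hnf hc
    exact ⟨by linarith [hgx'.1, hbet.2], this⟩
  · left
    push_neg at hc
    exact ⟨hc, by linarith [hgx'.2, hbet.1]⟩

lemma ct_bound {p : X.ι × Y.ι} (hp : p ∈ cpc X Y) :
    ∀ x ∈ Set.Ioo (cu X Y p) (cv X Y p), 1 / |cd X Y p x| ≤ ct X Y p := by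
  obtain ⟨h1, h2, hne⟩ := mem_cpc X Y hp
  have hlt := (CC_eq_Ioo X Y hp).2
  have hYp := Y.Lam_pos
  have hXp := X.Lam_pos
  intro x hx
  have hcdx := cd_abs X Y hp x hx
  have hcdxpos : (0:ℝ) < |cd X Y p x| := lt_of_lt_of_le (mul_pos hXp hYp) hcdx
  rw [ct]
  by_cases hf : cfull X Y p
  · rw [if_pos hf]
    obtain ⟨ξ, hξ, hslope⟩ := exists_hasDerivAt_eq_slope (cg X Y p) (cd X Y p) hlt
      (ccont X Y hp) (cd_hasDeriv X Y hp)
    have hcdξ : (0:ℝ) < |cd X Y p ξ| :=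
      lt_of_lt_of_le (mul_pos hXp hYp) (cd_abs X Y hp ξ hξ)
    have hdel : Y.del ≤ |cg X Y p (cv X Y p) - cg X Y p (cu X Y p)| := cfull_del X Y hp hf
    have hξbound : 1 / |cd X Y p ξ| ≤ (cv X Y p - cu X Y p) / Y.del := by
      rw [hslope, abs_div, abs_of_pos (by linarith : (0:ℝ) < cv X Y p - cu X Y p)]
      rw [one_div_div]
      have h0 : (0:ℝ) < |cg X Y p (cv X Y p) - cg X Y p (cu X Y p)| :=
        lt_of_lt_of_le Y.hdel hdel
      rw [div_le_div_iff₀ h0 Y.hdel]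
      nlinarith [sub_pos.mpr hlt]
    -- distortion transfer from ξ to x
    have hDd' : (0:ℝ) ≤ cDd X Y := by
      rw [cDd]
      have := X.hDd0
      have := Y.hDd0
      positivity
    have hdist := cd_dist X Y hp ξ hξ x hx
    have himgs : |cg X Y p ξ - cg X Y p x| ≤ 1 := by
      have a1 := cimg X Y hp ξ (Set.Ioo_subset_Icc_self hξ)
      have a2 := cimg X Y hp x (Set.Ioo_subset_Icc_self hx)
      rw [abs_le]
      constructor <;> [linarith [a1.1, a2.2]; linarith [a1.2, a2.1]]
    have hlog : Real.log (abs (cd X Y p ξ)) - Real.log (abs (cd X Y p x)) ≤ cDd X Y := by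
      calc Real.log (abs (cd X Y p ξ)) - Real.log (abs (cd X Y p x))
          ≤ |Real.log (abs (cd X Y p ξ)) - Real.log (abs (cd X Y p x))| := le_abs_self _
        _ ≤ cDd X Y * |cg X Y p ξ - cg X Y p x| := hdist
        _ ≤ cDd X Y * 1 := mul_le_mul_of_nonneg_left himgs hDd'
        _ = cDd X Y := mul_one _
    have hratio : |cd X Y p ξ| ≤ Real.exp (cDd X Y) * |cd X Y p x| := by
      have : Real.log (abs (cd X Y p ξ)) ≤
          Real.log (Real.exp (cDd X Y) * |cd X Y p x|) := by
        rw [Real.log_mul (Real.exp_pos _).ne' hcdxpos.ne', Real.log_exp]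
        linarith
      exact (Real.log_le_log_iff hcdξ (by positivity)).1 this
    have hfin : 1 / |cd X Y p x| ≤ Real.exp (cDd X Y) * (1 / |cd X Y p ξ|) := by
      rw [div_le_iff₀ hcdxpos]
      calc (1:ℝ) = |cd X Y p ξ| * (1 / |cd X Y p ξ|) := by field_simp
        _ ≤ (Real.exp (cDd X Y) * |cd X Y p x|) * (1 / |cd X Y p ξ|) :=
            mul_le_mul_of_nonneg_right hratio (by positivity)
        _ = Real.exp (cDd X Y) * (1 / |cd X Y p ξ|) * |cd X Y p x| := by ring
    calc 1 / |cd X Y p x| ≤ Real.exp (cDd X Y) * (1 / |cd X Y p ξ|) := hfin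
      _ ≤ Real.exp (cDd X Y) * ((cv X Y p - cu X Y p) / Y.del) :=
          mul_le_mul_of_nonneg_left hξbound (le_of_lt (Real.exp_pos _))
      _ = Real.exp (cDd X Y) * (cv X Y p - cu X Y p) / Y.del := by ring
  · rw [if_neg hf]
    have hx2 := cmap_Ioo X Y hp x hx
    have hx1 := cmap_mem_Ioo_parent X Y hp x hx
    have hYd := Y.d_ne_zero h2 hx2
    have hXd := X.d_ne_zero h1 hx1
    have hXdpos : (0:ℝ) < |X.d p.1 x| := lt_of_lt_of_le hXp hXd
    have hYdpos : (0:ℝ) < |Y.d p.2 (X.g p.1 x)| := lt_of_lt_of_le hYp hYd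
    have habs : |cd X Y p x| = |Y.d p.2 (X.g p.1 x)| * |X.d p.1 x| := by
      rw [cd, abs_mul]
    rw [habs]
    have e1 : 1 / (|Y.d p.2 (X.g p.1 x)| * |X.d p.1 x|) =
        (1 / |Y.d p.2 (X.g p.1 x)|) * (1 / |X.d p.1 x|) := by
      field_simp
    rw [e1]
    have b1 : 1 / |Y.d p.2 (X.g p.1 x)| ≤ 1 / Y.Lam :=
      one_div_le_one_div_of_le hYp hYd
    have b2 : 1 / |X.d p.1 x| ≤ X.t p.1 := X.ht p.1 h1 x hx1
    calc (1 / |Y.d p.2 (X.g p.1 x)|) * (1 / |X.d p.1 x|)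
        ≤ (1 / Y.Lam) * X.t p.1 := by
          apply mul_le_mul b1 b2 (by positivity) (by positivity)
      _ = X.t p.1 / Y.Lam := by ring

lemma ct_nonneg {p : X.ι × Y.ι} (hp : p ∈ cpc X Y) : 0 ≤ ct X Y p := by
  have hlt := (CC_eq_Ioo X Y hp).2
  rw [ct]
  by_cases hf : cfull X Y p
  · rw [if_pos hf]
    apply div_nonneg (mul_nonneg (Real.exp_pos _).le (by linarith)) (le_of_lt Y.hdel)
  · rw [if_neg hf]
    obtain ⟨h1, h2, hne⟩ := mem_cpc X Y hp
    have := X.ht0 p.1 h1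
    have := Y.Lam_pos
    positivity

lemma cdisj : ∀ p ∈ cpc X Y, ∀ q ∈ cpc X Y, p ≠ q →
    Disjoint (Set.Ioo (cu X Y p) (cv X Y p)) (Set.Ioo (cu X Y q) (cv X Y q)) := by
  intro p hp q hq hpq
  rw [← (CC_eq_Ioo X Y hp).1, ← (CC_eq_Ioo X Y hq).1]
  obtain ⟨hp1, hp2, -⟩ := mem_cpc X Y hp
  obtain ⟨hq1, hq2, -⟩ := mem_cpc X Y hq
  rw [Set.disjoint_left]
  intro x hxp hxq
  by_cases h : p.1 = q.1
  · have h2 : p.2 ≠ q.2 := by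
      intro h2
      exact hpq (Prod.ext h h2)
    have d1 : X.g p.1 x ∈ Set.Ioo (Y.u p.2) (Y.v p.2) := hxp.2
    have d2 : X.g p.1 x ∈ Set.Ioo (Y.u q.2) (Y.v q.2) := by
      have := hxq.2
      rw [← h] at this
      exact this
    exact Set.disjoint_left.1 (Y.hdisj p.2 hp2 q.2 hq2 h2) d1 d2
  · exact Set.disjoint_left.1 (X.hdisj p.1 hp1 q.1 hq1 h) hxp.1 hxq.1

lemma cIoo_sub_unit {p : X.ι × Y.ι} (hp : p ∈ cpc X Y) :
    Set.Ioo (cu X Y p) (cv X Y p) ⊆ Set.Icc (0:ℝ) 1 := by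
  obtain ⟨h1, -, -⟩ := mem_cpc X Y hp
  intro x hx
  have hx' := cuv_sub X Y hp (Set.Ioo_subset_Icc_self hx)
  obtain ⟨ha, hb⟩ := X.hsub p.1 h1
  exact ⟨le_trans ha hx'.1, le_trans hx'.2 hb⟩

lemma clen_sum : ∑ p ∈ cpc X Y, (cv X Y p - cu X Y p) ≤ 1 := by
  have hmeas : ∀ p ∈ cpc X Y, MeasurableSet (Set.Ioo (cu X Y p) (cv X Y p)) :=
    fun p _ => measurableSet_Ioo
  have hd : (↑(cpc X Y) : Set (X.ι × Y.ι)).Pairwise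
      (Function.onFun Disjoint fun p => Set.Ioo (cu X Y p) (cv X Y p)) := by
    intro p hp q hq hpq
    exact cdisj X Y p hp q hq hpq
  have key := measure_biUnion_finset hd hmeas (μ := volume)
  have hsub : (⋃ p ∈ cpc X Y, Set.Ioo (cu X Y p) (cv X Y p)) ⊆ Set.Icc (0:ℝ) 1 :=
    Set.iUnion₂_subset (fun p hp => cIoo_sub_unit X Y hp)
  have hle : ∑ p ∈ cpc X Y, volume (Set.Ioo (cu X Y p) (cv X Y p)) ≤ 1 := by
    rw [← key]
    calc volume (⋃ p ∈ cpc X Y, Set.Ioo (cu X Y p) (cv X Y p))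
        ≤ volume (Set.Icc (0:ℝ) 1) := measure_mono hsub
      _ = 1 := by rw [Real.volume_Icc]; norm_num
  have hvol : ∀ p ∈ cpc X Y, volume (Set.Ioo (cu X Y p) (cv X Y p)) =
      ENNReal.ofReal (cv X Y p - cu X Y p) := fun p _ => Real.volume_Ioo
  rw [Finset.sum_congr rfl hvol] at hle
  rw [← ENNReal.ofReal_sum_of_nonneg
    (fun p hp => le_of_lt (sub_pos.mpr (CC_eq_Ioo X Y hp).2))] at hle
  rw [← ENNReal.ofReal_one] at hle
  exact (ENNReal.ofReal_le_ofReal_iff (by norm_num)).1 hle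

lemma ccov : (Set.Icc (0:ℝ) 1 \ ⋃ p ∈ cpc X Y, Set.Ioo (cu X Y p) (cv X Y p)).Finite := by
  set EY : Set ℝ := Set.Icc (0:ℝ) 1 \ ⋃ j ∈ Y.pc, Set.Ioo (Y.u j) (Y.v j) with hEY
  have hEYfin : EY.Finite := Y.hcov
  set Ti : X.ι → Set ℝ := fun i => {x ∈ Set.Ioo (X.u i) (X.v i) | X.g i x ∈ EY} with hTi
  have hTifin : ∀ i ∈ X.pc, (Ti i).Finite := by
    intro i hi
    apply Set.Finite.of_finite_image (f := X.g i)
    · apply hEYfin.subset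
      rintro _ ⟨x, hx, rfl⟩
      exact hx.2
    · exact (X.injOn hi).mono (fun x hx => Set.Ioo_subset_Icc_self hx.1)
  apply Set.Finite.subset (Set.Finite.union X.hcov
    (Set.Finite.biUnion (X.pc.finite_toSet) hTifin))
  intro x hx
  obtain ⟨hxI, hxn⟩ := hx
  by_cases hpar : x ∈ ⋃ i ∈ X.pc, Set.Ioo (X.u i) (X.v i)
  · rcases Set.mem_iUnion₂.1 hpar with ⟨i, hi, hxi⟩
    right
    apply Set.mem_biUnion hi
    refine ⟨hxi, ?_⟩
    have hgx : X.g i x ∈ Set.Icc (0:ℝ) 1 := X.himg i hi x (Set.Ioo_subset_Icc_self hxi)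
    by_cases hgY : X.g i x ∈ ⋃ j ∈ Y.pc, Set.Ioo (Y.u j) (Y.v j)
    · exfalso
      rcases Set.mem_iUnion₂.1 hgY with ⟨j, hj, hgij⟩
      have hxCC : x ∈ CC X Y (i, j) := ⟨hxi, hgij⟩
      have hij : (i, j) ∈ cpc X Y := by
        rw [cpc, Finset.mem_filter, Finset.mem_product]
        exact ⟨⟨hi, hj⟩, ⟨x, hxCC⟩⟩
      apply hxn
      apply Set.mem_biUnion hij
      rw [← (CC_eq_Ioo X Y hij).1]
      exact hxCC
    · exact ⟨hgx, hgY⟩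
  · left; exact ⟨hxI, hpar⟩

lemma csum : ∑ p ∈ cpc X Y, ct X Y p ≤
    2 / Y.Lam * X.I + Real.exp (cDd X Y) / Y.del := by
  classical
  rw [← Finset.sum_filter_add_sum_filter_not (cpc X Y) (cfull X Y) (ct X Y)]
  have hYp := Y.Lam_pos
  -- full part
  have hfull : ∑ p ∈ (cpc X Y).filter (cfull X Y), ct X Y p ≤
      Real.exp (cDd X Y) / Y.del := by
    have e1 : ∀ p ∈ (cpc X Y).filter (cfull X Y),
        ct X Y p = Real.exp (cDd X Y) / Y.del * (cv X Y p - cu X Y p) := by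
      intro p hp
      rw [Finset.mem_filter] at hp
      rw [ct, if_pos hp.2]
      ring
    rw [Finset.sum_congr rfl e1, ← Finset.mul_sum]
    have h2 : ∑ p ∈ (cpc X Y).filter (cfull X Y), (cv X Y p - cu X Y p) ≤ 1 := by
      apply le_trans _ (clen_sum X Y)
      apply Finset.sum_le_sum_of_subset_of_nonneg (Finset.filter_subset _ _)
      intro p hp _
      exact le_of_lt (sub_pos.mpr (CC_eq_Ioo X Y hp).2)
    calc Real.exp (cDd X Y) / Y.del *
          ∑ p ∈ (cpc X Y).filter (cfull X Y), (cv X Y p - cu X Y p)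
        ≤ Real.exp (cDd X Y) / Y.del * 1 := by
          apply mul_le_mul_of_nonneg_left h2
            (div_nonneg (Real.exp_pos _).le (le_of_lt Y.hdel))
      _ = Real.exp (cDd X Y) / Y.del := mul_one _
  -- partial part
  have hpartial : ∑ p ∈ (cpc X Y).filter (fun p => ¬ cfull X Y p), ct X Y p ≤
      2 / Y.Lam * X.I := by
    set s := (cpc X Y).filter (fun p => ¬ cfull X Y p) with hs
    have e1 : ∀ p ∈ s, ct X Y p = X.t p.1 / Y.Lam := by
      intro p hp
      rw [hs, Finset.mem_filter] at hp
      rw [ct, if_neg hp.2]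
    rw [Finset.sum_congr rfl e1]
    have hmaps : ∀ p ∈ s, p.1 ∈ X.pc := by
      intro p hp
      rw [hs, Finset.mem_filter] at hp
      exact (mem_cpc X Y hp.1).1
    rw [← Finset.sum_fiberwise_of_maps_to hmaps (fun p => X.t p.1 / Y.Lam)]
    have hinner : ∀ i ∈ X.pc,
        ∑ p ∈ s.filter (fun p => p.1 = i), X.t p.1 / Y.Lam ≤ 2 * (X.t i / Y.Lam) := by
      intro i hi
      have e2 : ∀ p ∈ s.filter (fun p => p.1 = i), X.t p.1 / Y.Lam = X.t i / Y.Lam := by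
        intro p hp
        rw [Finset.mem_filter] at hp
        rw [hp.2]
      rw [Finset.sum_congr rfl e2, Finset.sum_const, nsmul_eq_mul]
      have hcard : (s.filter (fun p => p.1 = i)).card ≤ 2 := by
        have hinj : ∀ p ∈ s.filter (fun p => p.1 = i), ∀ q ∈ s.filter (fun p => p.1 = i),
            (decide (gl X p.1 ∈ Set.Ioo (Y.u p.2) (Y.v p.2)) =
             decide (gl X q.1 ∈ Set.Ioo (Y.u q.2) (Y.v q.2))) → p = q := by
          intro p hp q hq hde
          rw [Finset.mem_filter, hs, Finset.mem_filter] at hp hq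
          obtain ⟨⟨hpc, hpnf⟩, hp1⟩ := hp
          obtain ⟨⟨hqc, hqnf⟩, hq1⟩ := hq
          by_contra hne
          have h2 : p.2 ≠ q.2 := by
            intro h2
            exact hne (Prod.ext (hp1.trans hq1.symm) h2)
          have hdisjY := Y.hdisj p.2 (mem_cpc X Y hpc).2.1 q.2 (mem_cpc X Y hqc).2.1 h2
          by_cases hgl : gl X p.1 ∈ Set.Ioo (Y.u p.2) (Y.v p.2)
          · have hgl' : gl X q.1 ∈ Set.Ioo (Y.u q.2) (Y.v q.2) :=
              of_decide_eq_true (hde.symm.trans (decide_eq_true hgl))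
            rw [hq1, ← hp1] at hgl'
            exact Set.disjoint_left.1 hdisjY hgl hgl'
          · have hgl' : gl X q.1 ∉ Set.Ioo (Y.u q.2) (Y.v q.2) := by
              intro hc
              exact hgl (of_decide_eq_true (hde.trans (decide_eq_true hc)))
            have hgr := (partial_mem X Y hpc hpnf).resolve_left hgl
            have hgr' := (partial_mem X Y hqc hqnf).resolve_left hgl'
            rw [hq1, ← hp1] at hgr'
            exact Set.disjoint_left.1 hdisjY hgr hgr'
        calc (s.filter (fun p => p.1 = i)).card ≤ (Finset.univ : Finset Bool).card := by
              apply Finset.card_le_card_of_injOn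
                (fun p => decide (gl X p.1 ∈ Set.Ioo (Y.u p.2) (Y.v p.2)))
                (fun p _ => Finset.mem_univ _)
              intro p hp q hq hde
              exact hinj p hp q hq hde
          _ = 2 := by simp
      have ht0 : 0 ≤ X.t i / Y.Lam := by
        have := X.ht0 i hi
        positivity
      calc (↑(s.filter (fun p => p.1 = i)).card : ℝ) * (X.t i / Y.Lam)
          ≤ 2 * (X.t i / Y.Lam) := by
            apply mul_le_mul_of_nonneg_right _ ht0
            exact_mod_cast hcard
        _ = 2 * (X.t i / Y.Lam) := rfl
    calc ∑ i ∈ X.pc, ∑ p ∈ s.filter (fun p => p.1 = i), X.t p.1 / Y.Lam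
        ≤ ∑ i ∈ X.pc, 2 * (X.t i / Y.Lam) := Finset.sum_le_sum hinner
      _ = 2 / Y.Lam * ∑ i ∈ X.pc, X.t i := by
          rw [Finset.mul_sum]
          apply Finset.sum_congr rfl
          intro i _
          ring
      _ ≤ 2 / Y.Lam * X.I := by
          apply mul_le_mul_of_nonneg_left X.hI (by positivity)
  linarith

/-- The composed system. -/
def comp : PES (S ∘ F) where
  ι := X.ι × Y.ι
  pc := cpc X Y
  u := cu X Y
  v := cv X Y
  g := cg X Y
  d := cd X Y
  t := ct X Y
  Lam := X.Lam * Y.Lam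
  Dd := cDd X Y
  del := if h : (cpc X Y).Nonempty then
      (cpc X Y).inf' h (fun p => |cg X Y p (cv X Y p) - cg X Y p (cu X Y p)|) else 1
  I := 2 / Y.Lam * X.I + Real.exp (cDd X Y) / Y.del
  hLam := by nlinarith [X.hLam, Y.hLam]
  hDd0 := by
    rw [cDd]
    have := X.hDd0
    have := Y.hDd0
    have := Y.Lam_pos
    positivity
  hdel := by
    split_ifs with h
    · rw [Finset.lt_inf'_iff]
      intro p hp
      have h1 := clen_pos X Y hp
      have h2 : (0:ℝ) < cLam X Y := by
        rw [cLam]; exact mul_pos X.Lam_pos Y.Lam_pos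
      have h3 := (CC_eq_Ioo X Y hp).2
      nlinarith
    · norm_num
  huv := fun p hp => (CC_eq_Ioo X Y hp).2
  hsub := by
    intro p hp
    have h1 := cuv_sub X Y hp
    obtain ⟨ha, hb⟩ := X.hsub p.1 (mem_cpc X Y hp).1
    have hlt := (CC_eq_Ioo X Y hp).2
    constructor
    · have := (h1 ⟨le_refl _, le_of_lt hlt⟩).1
      linarith
    · have := (h1 ⟨le_of_lt hlt, le_refl _⟩).2
      linarith
  hdisj := cdisj X Y
  hcov := ccov X Y
  heq := by
    intro p hp x hx
    obtain ⟨h1, h2, -⟩ := mem_cpc X Y hp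
    have hx1 := cmap_mem_Ioo_parent X Y hp x hx
    have hx2 := cmap_Ioo X Y hp x hx
    show S (F x) = cg X Y p x
    rw [X.heq p.1 h1 hx1]
    exact Y.heq p.2 h2 hx2
  hgc := fun p hp => ccont X Y hp
  hd := fun p hp => cd_hasDeriv X Y hp
  hsign := fun p hp => cd_sign X Y hp
  hdist := fun p hp => cd_dist X Y hp
  himg := fun p hp => cimg X Y hp
  hdelimg := by
    intro p hp
    rw [dif_pos ⟨p, hp⟩]
    exact Finset.inf'_le _ hp
  ht := fun p hp => ct_bound X Y hp
  ht0 := fun p hp => ct_nonneg X Y hp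
  hI := csum X Y

@[simp] lemma comp_Lam : (comp X Y).Lam = X.Lam * Y.Lam := rfl
@[simp] lemma comp_Dd : (comp X Y).Dd = Y.Dd + X.Dd / Y.Lam := rfl
@[simp] lemma comp_I : (comp X Y).I = 2 / Y.Lam * X.I + Real.exp (Y.Dd + X.Dd / Y.Lam) / Y.del :=
  rfl

end PES

/-- Mean value expansion bound, standalone version. -/
lemma expand_base {g d : ℝ → ℝ} {A B lam : ℝ}
    (cont : ContinuousOn g (Set.Icc A B))
    (hder : ∀ x ∈ Set.Ioo A B, HasDerivAt g (d x) x)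
    (habs : ∀ x ∈ Set.Ioo A B, lam ≤ |d x|) (hlam : 0 < lam)
    {x y : ℝ} (hx : x ∈ Set.Icc A B) (hy : y ∈ Set.Icc A B) :
    lam * |y - x| ≤ |g y - g x| := by
  rcases lt_trichotomy x y with h | h | h
  · obtain ⟨c, hc, hslope⟩ := exists_hasDerivAt_eq_slope g d h
      (cont.mono (Set.Icc_subset_Icc hx.1 hy.2))
      (fun z hz => hder z (Set.Ioo_subset_Ioo hx.1 hy.2 hz))
    rw [eq_div_iff (by linarith : y - x ≠ 0)] at hslope
    have h1 : |g y - g x| = |d c| * (y - x) := by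
      rw [← hslope, abs_mul, abs_of_pos (by linarith : (0:ℝ) < y - x)]
    rw [h1, abs_of_pos (by linarith : (0:ℝ) < y - x)]
    have := habs c (Set.Ioo_subset_Ioo hx.1 hy.2 hc)
    nlinarith
  · simp [h]
  · obtain ⟨c, hc, hslope⟩ := exists_hasDerivAt_eq_slope g d h
      (cont.mono (Set.Icc_subset_Icc hy.1 hx.2))
      (fun z hz => hder z (Set.Ioo_subset_Ioo hy.1 hx.2 hz))
    rw [eq_div_iff (by linarith : x - y ≠ 0)] at hslope
    have h1 : |g x - g y| = |d c| * (x - y) := by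
      rw [← hslope, abs_mul, abs_of_pos (by linarith : (0:ℝ) < x - y)]
    rw [abs_sub_comm (g y), abs_sub_comm y, h1, abs_of_pos (by linarith : (0:ℝ) < x - y)]
    have := habs c (Set.Ioo_subset_Ioo hy.1 hx.2 hc)
    nlinarith

theorem basePES {Tm : ℝ → ℝ} {lam : ℝ} (hlam : 1 < lam)
    (hT : PiecewiseC2Expanding Tm lam)
    (hmaps : Set.MapsTo Tm (Set.Icc 0 1) (Set.Icc 0 1)) :
    ∃ X : PES Tm, X.Lam = lam := by
  classical
  obtain ⟨N, a, hN, ha0, haN, hmono, hbr⟩ := hT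
  have hlam0 : (0:ℝ) < lam := by linarith
  -- choose branch functions
  have hbr' : ∀ i : ℕ, ∃ g : ℝ → ℝ, i < N →
      ContDiffOn ℝ 2 g (Set.Icc (a i) (a (i + 1))) ∧
      Set.EqOn Tm g (Set.Ioo (a i) (a (i + 1))) ∧
      ∀ x ∈ Set.Icc (a i) (a (i + 1)),
        lam ≤ |derivWithin g (Set.Icc (a i) (a (i + 1))) x| := by
    intro i
    by_cases h : i < N
    · obtain ⟨g, h1, h2, _, h4⟩ := hbr i h
      exact ⟨g, fun _ => ⟨h1, h2, h4⟩⟩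
    · exact ⟨id, fun hc => absurd hc h⟩
  choose G hG using hbr'
  set d : ℕ → ℝ → ℝ := fun i => derivWithin (G i) (Set.Icc (a i) (a (i+1))) with hdd
  set d2 : ℕ → ℝ → ℝ := fun i => derivWithin (d i) (Set.Icc (a i) (a (i+1))) with hd2
  -- monotonicity of the partition
  have amono : ∀ j, j ≤ N → ∀ i, i ≤ j → a i ≤ a j := by
    intro j
    induction j with
    | zero => intro _ i hi; rw [Nat.le_zero.mp hi]
    | succ k ih =>
      intro hk i hi
      rcases Nat.lt_or_ge i (k+1) with h | h
      · have h1 : a i ≤ a k := ih (by omega) i (by omega)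
        have h2 := hmono k (by omega)
        linarith
      · have : i = k + 1 := by omega
        rw [this]
  have ha_nonneg : ∀ i, i ≤ N → 0 ≤ a i := by
    intro i hi
    have := amono i hi 0 (Nat.zero_le _)
    linarith [this, ha0.ge, ha0.le]
  have ha_le_one : ∀ i, i ≤ N → a i ≤ 1 := by
    intro i hi
    have := amono N (le_refl _) i hi
    linarith [haN.le, haN.ge]
  have hNne : (Finset.range N).Nonempty := ⟨0, Finset.mem_range.mpr hN⟩
  -- basic facts per branch
  have hfacts : ∀ i ∈ Finset.range N,
      ContDiffOn ℝ 2 (G i) (Set.Icc (a i) (a (i + 1))) ∧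
      Set.EqOn Tm (G i) (Set.Ioo (a i) (a (i + 1))) ∧
      (∀ x ∈ Set.Icc (a i) (a (i + 1)), lam ≤ |d i x|) := by
    intro i hi
    rw [Finset.mem_range] at hi
    exact ⟨(hG i hi).1, (hG i hi).2.1, (hG i hi).2.2⟩
  have hderiv : ∀ i ∈ Finset.range N, ∀ x ∈ Set.Ioo (a i) (a (i+1)),
      HasDerivAt (G i) (d i x) x := by
    intro i hi x hx
    have hC2 := (hfacts i hi).1
    have hd' : DifferentiableOn ℝ (G i) (Set.Icc (a i) (a (i+1))) :=
      hC2.differentiableOn (by norm_num)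
    have := (hd' x (Set.Ioo_subset_Icc_self hx)).hasDerivWithinAt
    exact this.hasDerivAt (Icc_mem_nhds hx.1 hx.2)
  have hcont : ∀ i ∈ Finset.range N, ContinuousOn (G i) (Set.Icc (a i) (a (i+1))) :=
    fun i hi => (hfacts i hi).1.continuousOn
  have huvlt : ∀ i ∈ Finset.range N, a i < a (i+1) :=
    fun i hi => hmono i (Finset.mem_range.1 hi)
  have hdcont : ∀ i ∈ Finset.range N, ContinuousOn (d i) (Set.Icc (a i) (a (i+1))) := by
    intro i hi
    have hC2 := (hfacts i hi).1
    exact hC2.continuousOn_derivWithin (uniqueDiffOn_Icc (huvlt i hi)) (by norm_num)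
  -- sign dichotomy
  have hsgn : ∀ i ∈ Finset.range N,
      (∀ x ∈ Set.Ioo (a i) (a (i+1)), lam ≤ d i x) ∨
      (∀ x ∈ Set.Ioo (a i) (a (i+1)), d i x ≤ -lam) := by
    intro i hi
    have habs := (hfacts i hi).2.2
    by_cases hall : ∀ x ∈ Set.Ioo (a i) (a (i+1)), lam ≤ d i x
    · exact Or.inl hall
    · right
      push_neg at hall
      obtain ⟨x₀, hx₀, hx₀'⟩ := hall
      have hx₀Icc := Set.Ioo_subset_Icc_self hx₀
      have hx₀neg : d i x₀ ≤ -lam := by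
        have := habs x₀ hx₀Icc
        rcases le_or_gt (d i x₀) 0 with h | h
        · rw [abs_of_nonpos h] at this; linarith
        · rw [abs_of_pos h] at this; linarith
      intro x hx
      have hxIcc := Set.Ioo_subset_Icc_self hx
      by_contra hc
      push_neg at hc
      have hxpos : lam ≤ d i x := by
        have := habs x hxIcc
        rcases le_or_gt (d i x) 0 with h | h
        · rw [abs_of_nonpos h] at this; linarith
        · rw [abs_of_pos h] at this; linarith
      -- IVT: d has a zero between x₀ and x
      have hsub : Set.uIcc x₀ x ⊆ Set.Icc (a i) (a (i+1)) :=
        Set.uIcc_subset_Icc hx₀Icc hxIcc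
      have h0mem : (0:ℝ) ∈ Set.uIcc (d i x₀) (d i x) := by
        rw [Set.mem_uIcc]
        left
        constructor <;> linarith
      obtain ⟨z, hz, hz0⟩ := intermediate_value_uIcc ((hdcont i hi).mono hsub) h0mem
      have := habs z (hsub hz)
      rw [hz0] at this
      simp at this
      linarith
  -- second derivative bound
  have hKex : ∀ i, ∃ K : ℝ, 0 ≤ K ∧ (i ∈ Finset.range N →
      ∀ x ∈ Set.Icc (a i) (a (i+1)), ‖d2 i x‖ ≤ K) := by
    intro i
    by_cases hi : i ∈ Finset.range N
    · have hC2 := (hfacts i hi).1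
      have h1 : ContDiffOn ℝ 1 (d i) (Set.Icc (a i) (a (i+1))) :=
        hC2.derivWithin (uniqueDiffOn_Icc (huvlt i hi)) (by norm_num)
      have h2 : ContinuousOn (d2 i) (Set.Icc (a i) (a (i+1))) :=
        h1.continuousOn_derivWithin (uniqueDiffOn_Icc (huvlt i hi)) (by norm_num)
      obtain ⟨K, hK⟩ := isCompact_Icc.exists_bound_of_continuousOn h2
      exact ⟨max K 0, le_max_right _ _,
        fun _ x hx => le_trans (hK x hx) (le_max_left _ _)⟩
    · exact ⟨0, le_refl _, fun hc => absurd hc hi⟩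
  choose Kf hKf using hKex
  set Dd : ℝ := ((Finset.range N).sup' hNne Kf) / lam ^ 2 with hDdDef
  have hKle : ∀ i ∈ Finset.range N, Kf i ≤ (Finset.range N).sup' hNne Kf :=
    fun i hi => Finset.le_sup' Kf hi
  have hDd0 : 0 ≤ Dd := by
    rw [hDdDef]
    apply div_nonneg _ (by positivity)
    exact le_trans (hKf 0).1 (hKle 0 (Finset.mem_range.2 hN))
  -- distortion bound
  have hdistb : ∀ i ∈ Finset.range N, ∀ x ∈ Set.Ioo (a i) (a (i+1)),
      ∀ y ∈ Set.Ioo (a i) (a (i+1)),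
      |Real.log (abs (d i x)) - Real.log (abs (d i y))| ≤ Dd * |G i x - G i y| := by
    intro i hi x hx y hy
    have habs' := (hfacts i hi).2.2
    have hC2 := (hfacts i hi).1
    have h1 : ContDiffOn ℝ 1 (d i) (Set.Icc (a i) (a (i+1))) :=
      hC2.derivWithin (uniqueDiffOn_Icc (huvlt i hi)) (by norm_num)
    have hdiffw : ∀ z ∈ Set.Ioo (a i) (a (i+1)),
        HasDerivWithinAt (d i) (d2 i z) (Set.Ioo (a i) (a (i+1))) z := by
      intro z hz
      have := ((h1.differentiableOn one_ne_zero) z (Set.Ioo_subset_Icc_self hz)).hasDerivWithinAt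
      exact this.mono Set.Ioo_subset_Icc_self
    have hd2b : ∀ z ∈ Set.Ioo (a i) (a (i+1)), |d2 i z| ≤ Kf i := by
      intro z hz
      exact (hKf i).2 hi z (Set.Ioo_subset_Icc_self hz)
    have hdabs : ∀ z ∈ Set.Ioo (a i) (a (i+1)), lam ≤ |d i z| :=
      fun z hz => habs' z (Set.Ioo_subset_Icc_self hz)
    have hKf0 := (hKf i).1
    -- the Lipschitz bound for log |d i ·| on the open piece
    have core : |Real.log (abs (d i x)) - Real.log (abs (d i y))| ≤ (Kf i / lam) * |x - y| := by
      rcases hsgn i hi with hpos | hneg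
      · set φ : ℝ → ℝ := fun z => Real.log (d i z) with hφdef
        have hφ : ∀ z ∈ Set.Ioo (a i) (a (i+1)),
            HasDerivWithinAt φ (d2 i z / d i z) (Set.Ioo (a i) (a (i+1))) z := by
          intro z hz
          exact (hdiffw z hz).log (by linarith [hpos z hz])
        have hbound : ∀ z ∈ Set.Ioo (a i) (a (i+1)), ‖d2 i z / d i z‖ ≤ Kf i / lam := by
          intro z hz
          rw [Real.norm_eq_abs, abs_div]
          exact div_le_div₀ hKf0 (hd2b z hz) hlam0 (hdabs z hz)
        have hlip := Convex.norm_image_sub_le_of_norm_hasDerivWithin_le hφ hbound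
          (convex_Ioo _ _) hy hx
        rw [Real.norm_eq_abs, Real.norm_eq_abs] at hlip
        have ex : ∀ z ∈ Set.Ioo (a i) (a (i+1)), Real.log (abs (d i z)) = φ z := by
          intro z hz
          rw [hφdef, abs_of_pos (by linarith [hpos z hz] : (0:ℝ) < d i z)]
        rw [ex x hx, ex y hy]
        exact hlip
      · set φ : ℝ → ℝ := fun z => Real.log (-(d i z)) with hφdef
        have hφ : ∀ z ∈ Set.Ioo (a i) (a (i+1)),
            HasDerivWithinAt φ ((-(d2 i z)) / (-(d i z))) (Set.Ioo (a i) (a (i+1))) z := by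
          intro z hz
          exact ((hdiffw z hz).neg).log (by rw [Pi.neg_apply]; linarith [hneg z hz])
        have hbound : ∀ z ∈ Set.Ioo (a i) (a (i+1)),
            ‖(-(d2 i z)) / (-(d i z))‖ ≤ Kf i / lam := by
          intro z hz
          rw [Real.norm_eq_abs, abs_div, abs_neg, abs_neg]
          exact div_le_div₀ hKf0 (hd2b z hz) hlam0 (hdabs z hz)
        have hlip := Convex.norm_image_sub_le_of_norm_hasDerivWithin_le hφ hbound
          (convex_Ioo _ _) hy hx
        rw [Real.norm_eq_abs, Real.norm_eq_abs] at hlip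
        have ex : ∀ z ∈ Set.Ioo (a i) (a (i+1)), Real.log (abs (d i z)) = φ z := by
          intro z hz
          rw [hφdef, abs_of_neg (by linarith [hneg z hz] : d i z < 0)]
        rw [ex x hx, ex y hy]
        exact hlip
    -- expansion transfer
    have hexp := expand_base (hcont i hi) (hderiv i hi) hdabs hlam0
      (Set.Ioo_subset_Icc_self hy) (Set.Ioo_subset_Icc_self hx)
    -- lam * |x - y| ≤ |G i x - G i y|
    have hxy : |x - y| ≤ |G i x - G i y| / lam := by
      rw [le_div_iff₀ hlam0]
      linarith [hexp]
    calc |Real.log (abs (d i x)) - Real.log (abs (d i y))|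
        ≤ (Kf i / lam) * |x - y| := core
      _ ≤ (Kf i / lam) * (|G i x - G i y| / lam) := by
          apply mul_le_mul_of_nonneg_left hxy (by positivity)
      _ = Kf i / lam ^ 2 * |G i x - G i y| := by ring
      _ ≤ Dd * |G i x - G i y| := by
          apply mul_le_mul_of_nonneg_right _ (abs_nonneg _)
          rw [hDdDef]
          gcongr
          exact hKle i hi
  -- image in [0,1]
  have himgb : ∀ i ∈ Finset.range N, ∀ x ∈ Set.Icc (a i) (a (i+1)), G i x ∈ Set.Icc (0:ℝ) 1 := by
    intro i hi x hx
    have hiN : i < N := Finset.mem_range.1 hi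
    have hIoo01 : Set.Ioo (a i) (a (i+1)) ⊆ Set.Icc (0:ℝ) 1 := by
      intro z hz
      constructor
      · linarith [ha_nonneg i (by omega), hz.1]
      · linarith [ha_le_one (i+1) (by omega), hz.2]
    have himgIoo : G i '' Set.Ioo (a i) (a (i+1)) ⊆ Set.Icc (0:ℝ) 1 := by
      rintro _ ⟨w, hw, rfl⟩
      rw [← (hfacts i hi).2.1 hw]
      exact hmaps (hIoo01 hw)
    have hxcl : x ∈ closure (Set.Ioo (a i) (a (i+1))) := by
      rw [closure_Ioo (ne_of_lt (huvlt i hi))]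
      exact hx
    have hcw : ContinuousWithinAt (G i) (Set.Ioo (a i) (a (i+1))) x :=
      ((hcont i hi) x hx).mono Set.Ioo_subset_Icc_self
    have := hcw.mem_closure_image hxcl
    exact closure_minimal himgIoo isClosed_Icc (closure_mono (Set.image_mono (f := G i) le_rfl.subset) this)
  -- disjointness
  have hdisjb : ∀ i ∈ Finset.range N, ∀ j ∈ Finset.range N, i ≠ j →
      Disjoint (Set.Ioo (a i) (a (i+1))) (Set.Ioo (a j) (a (j+1))) := by
    have key : ∀ i j, i < j → j < N →
        Disjoint (Set.Ioo (a i) (a (i+1))) (Set.Ioo (a j) (a (j+1))) := by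
      intro i j hij hjN
      rw [Set.disjoint_left]
      intro x hx1 hx2
      have : a (i+1) ≤ a j := amono j (by omega) (i+1) (by omega)
      linarith [hx1.2, hx2.1]
    intro i hi j hj hij
    rcases lt_or_gt_of_ne hij with h | h
    · exact key i j h (Finset.mem_range.1 hj)
    · exact (key j i h (Finset.mem_range.1 hi)).symm
  -- coverage
  have hcovb : (Set.Icc (0:ℝ) 1 \ ⋃ i ∈ Finset.range N, Set.Ioo (a i) (a (i+1))).Finite := by
    apply Set.Finite.subset (((Finset.range (N+1)).image a).finite_toSet)
    intro x hx
    obtain ⟨hxI, hxn⟩ := hx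
    simp only [Finset.coe_image, Set.mem_image, Finset.mem_coe, Finset.mem_range]
    by_contra hc
    push_neg at hc
    set s := (Finset.range (N+1)).filter (fun i => a i ≤ x) with hs
    have hsne : s.Nonempty := by
      refine ⟨0, ?_⟩
      rw [hs, Finset.mem_filter]
      exact ⟨Finset.mem_range.2 (by omega), by rw [ha0]; exact hxI.1⟩
    set i₀ := s.max' hsne with hi₀
    have hi₀mem : i₀ ∈ s := Finset.max'_mem _ _
    rw [hs, Finset.mem_filter, Finset.mem_range] at hi₀mem
    have hne0 : a i₀ ≠ x := fun h => hc i₀ (by omega) h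
    have hlt0 : a i₀ < x := lt_of_le_of_ne hi₀mem.2 hne0
    have hi₀N : i₀ < N := by
      by_contra h
      have : i₀ = N := by omega
      rw [this, haN] at hlt0
      linarith [hxI.2]
    have hxlt : x < a (i₀ + 1) := by
      by_contra h
      push_neg at h
      have hmem : i₀ + 1 ∈ s := by
        rw [hs, Finset.mem_filter, Finset.mem_range]
        exact ⟨by omega, h⟩
      have := Finset.le_max' s _ hmem
      omega
    apply hxn
    exact Set.mem_biUnion (Finset.mem_range.2 hi₀N) ⟨hlt0, hxlt⟩
  -- assemble
  have hdelb : ∀ i ∈ Finset.range N, 0 < |G i (a (i+1)) - G i (a i)| := by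
    intro i hi
    have := expand_base (hcont i hi) (hderiv i hi)
      (fun z hz => (hfacts i hi).2.2 z (Set.Ioo_subset_Icc_self hz)) hlam0
      (Set.left_mem_Icc.2 (le_of_lt (huvlt i hi)))
      (Set.right_mem_Icc.2 (le_of_lt (huvlt i hi)))
    have h2 : (0:ℝ) < |a (i+1) - a i| := by
      rw [abs_of_pos (by linarith [huvlt i hi] : (0:ℝ) < a (i+1) - a i)]
      linarith [huvlt i hi]
    nlinarith
  refine ⟨{
    ι := ℕ
    pc := Finset.range N
    u := a
    v := fun i => a (i+1)
    g := G
    d := d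
    t := fun _ => 1 / lam
    Lam := lam
    Dd := Dd
    del := (Finset.range N).inf' hNne (fun i => |G i (a (i+1)) - G i (a i)|)
    I := N * (1 / lam)
    hLam := hlam
    hDd0 := hDd0
    hdel := by
      rw [Finset.lt_inf'_iff]
      exact hdelb
    huv := huvlt
    hsub := by
      intro i hi
      have hiN := Finset.mem_range.1 hi
      exact ⟨ha_nonneg i (by omega), ha_le_one (i+1) (by omega)⟩
    hdisj := hdisjb
    hcov := hcovb
    heq := fun i hi => (hfacts i hi).2.1
    hgc := hcont
    hd := hderiv
    hsign := hsgn
    hdist := hdistb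
    himg := himgb
    hdelimg := fun i hi => Finset.inf'_le _ hi
    ht := by
      intro i hi x hx
      apply one_div_le_one_div_of_le hlam0
      exact (hfacts i hi).2.2 x (Set.Ioo_subset_Icc_self hx)
    ht0 := fun i _ => by positivity
    hI := by
      rw [Finset.sum_const, Finset.card_range, nsmul_eq_mul]
  }, rfl⟩
namespace PES

/-- Transport a system along an equality of maps. -/
def cast {F F' : ℝ → ℝ} (h : F = F') (X : PES F) : PES F' := h ▸ X

@[simp] lemma cast_Lam {F F' : ℝ → ℝ} (h : F = F') (X : PES F) : (X.cast h).Lam = X.Lam := by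
  cases h; rfl
@[simp] lemma cast_Dd {F F' : ℝ → ℝ} (h : F = F') (X : PES F) : (X.cast h).Dd = X.Dd := by
  cases h; rfl
@[simp] lemma cast_I {F F' : ℝ → ℝ} (h : F = F') (X : PES F) : (X.cast h).I = X.I := by
  cases h; rfl
@[simp] lemma cast_del {F F' : ℝ → ℝ} (h : F = F') (X : PES F) : (X.cast h).del = X.del := by
  cases h; rfl

lemma I_nonneg {F : ℝ → ℝ} (X : PES F) : 0 ≤ X.I :=
  le_trans (Finset.sum_nonneg X.ht0) X.hI

end PES

/-- The random word system, built by iterated composition. -/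
noncomputable def wSys {m : ℕ} {T : Fin m → ℝ → ℝ} (baseX : ∀ i, PES (T i)) (ω : Om m) :
    (L : ℕ) → PES (randComp T ω (L + 1))
  | 0 => PES.cast (by funext x; simp [randComp]) (baseX (ω ((0 : ℕ) : ℤ)))
  | (L+1) => PES.cast (by funext x; simp [randComp, Function.comp])
      ((wSys baseX ω L).comp (baseX (ω (((L+1 : ℕ)) : ℤ))))

lemma randComp_congr {m : ℕ} (T : Fin m → ℝ → ℝ) (ω ω' : Om m) (n : ℕ)
    (h : ∀ k < n, ω (k : ℤ) = ω' (k : ℤ)) : randComp T ω n = randComp T ω' n := by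
  induction n with
  | zero => rfl
  | succ k ih =>
    funext x
    have h1 : randComp T ω k = randComp T ω' k := ih (fun j hj => h j (by omega))
    simp [randComp, h1, h k (by omega)]

lemma randComp_add {m : ℕ} (T : Fin m → ℝ → ℝ) (ω : Om m) (a b : ℕ) :
    randComp T ω (a + b) =
      (randComp T (fun k => ω (k + (a : ℤ))) b) ∘ (randComp T ω a) := by
  induction b with
  | zero => rfl
  | succ k ih =>
    funext x
    have : ((a + k : ℕ) : ℤ) = (k : ℤ) + (a : ℤ) := by push_cast; ring
    show T (ω ((a + k : ℕ) : ℤ)) (randComp T ω (a + k) x) = _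
    rw [ih, this]
    rfl

lemma wSys_Lam {m : ℕ} {T : Fin m → ℝ → ℝ} (baseX : ∀ i, PES (T i)) {lam : ℝ}
    (hbase : ∀ i, (baseX i).Lam = lam) (ω : Om m) (L : ℕ) :
    (wSys baseX ω L).Lam = lam ^ (L + 1) := by
  induction L with
  | zero => simp [wSys, hbase]
  | succ k ih =>
    show (PES.cast _ _).Lam = _
    rw [PES.cast_Lam, PES.comp_Lam, ih, hbase, pow_succ, pow_succ]
    ring

lemma wSys_Dd {m : ℕ} {T : Fin m → ℝ → ℝ} (baseX : ∀ i, PES (T i)) {lam Mb : ℝ}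
    (hbase : ∀ i, (baseX i).Lam = lam) (hlam : 1 < lam)
    (hMb : ∀ i, (baseX i).Dd ≤ Mb) (hMb0 : 0 ≤ Mb) (ω : Om m) (L : ℕ) :
    (wSys baseX ω L).Dd ≤ lam / (lam - 1) * Mb := by
  have hfac : (1:ℝ) ≤ lam / (lam - 1) := by
    rw [le_div_iff₀ (by linarith)]
    linarith
  induction L with
  | zero =>
    show (PES.cast _ _).Dd ≤ _
    rw [PES.cast_Dd]
    calc (baseX _).Dd ≤ Mb := hMb _
      _ = 1 * Mb := (one_mul _).symm
      _ ≤ lam / (lam - 1) * Mb := mul_le_mul_of_nonneg_right hfac hMb0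
  | succ k ih =>
    show (PES.cast _ _).Dd ≤ _
    rw [PES.cast_Dd, PES.comp_Dd, hbase]
    have h1 : (wSys baseX ω k).Dd / lam ≤ (lam / (lam - 1) * Mb) / lam := by
      rw [div_eq_mul_inv, div_eq_mul_inv]
      exact mul_le_mul_of_nonneg_right ih (inv_nonneg.2 (by linarith))
    have h2 : Mb + (lam / (lam - 1) * Mb) / lam = lam / (lam - 1) * Mb := by
      have hne1 : lam ≠ 0 := by linarith
      have hne2 : lam - 1 ≠ 0 := by linarith
      field_simp
      ring
    calc (baseX _).Dd + (wSys baseX ω k).Dd / lam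
        ≤ Mb + (lam / (lam - 1) * Mb) / lam := add_le_add (hMb _) h1
      _ = lam / (lam - 1) * Mb := h2

set_option maxHeartbeats 2000000 in
theorem stmt6Aux (m : ℕ) (hm : 1 ≤ m) (T : Fin m → ℝ → ℝ) (lam : ℝ) (hlam : 1 < lam)
    (hT : ∀ i, PiecewiseC2Expanding (T i) lam)
    (hmaps : ∀ i, Set.MapsTo (T i) (Set.Icc 0 1) (Set.Icc 0 1)) :
    ∃ C : ℝ, 0 < C ∧ ∀ (ω : Om m) (n : ℕ), 1 ≤ n → ∀ ε : ℝ, 0 < ε →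
      (volume.restrict (Set.Icc (0:ℝ) 1)) {x | |randComp T ω n x - x| ≤ ε} ≤
        ENNReal.ofReal (C * ε) := by
  classical
  have hlam0 : (0:ℝ) < lam := by linarith
  have hbase := fun i => basePES hlam (hT i) (hmaps i)
  choose baseX hbaseL using hbase
  haveI hFm : Nonempty (Fin m) := ⟨⟨0, by omega⟩⟩
  -- constants
  set Mb := Finset.univ.sup' Finset.univ_nonempty (fun i : Fin m => (baseX i).Dd) with hMbdef
  have hMb : ∀ i, (baseX i).Dd ≤ Mb := by
    intro i
    rw [hMbdef]
    exact Finset.le_sup' (fun i : Fin m => (baseX i).Dd) (Finset.mem_univ i)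
  have hMb0 : 0 ≤ Mb := le_trans (baseX (Classical.arbitrary _)).hDd0 (hMb _)
  set Dmax := lam / (lam - 1) * Mb with hDmaxdef
  have hDmax0 : 0 ≤ Dmax := by
    rw [hDmaxdef]
    apply mul_nonneg _ hMb0
    apply div_nonneg (by linarith) (by linarith)
  set D2 := (4/3) * Dmax with hD2def
  have hD20 : 0 ≤ D2 := by rw [hD2def]; linarith
  -- choose the block length
  obtain ⟨n₀', hn₀'⟩ := pow_unbounded_of_one_lt (4:ℝ) hlam
  set n₀ := max n₀' 1 with hn₀def
  have hn₀1 : 1 ≤ n₀ := le_max_right _ _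
  have h4 : (4:ℝ) ≤ lam ^ n₀ := by
    calc (4:ℝ) ≤ lam ^ n₀' := le_of_lt hn₀'
      _ ≤ lam ^ n₀ := pow_le_pow_right₀ (le_of_lt hlam) (le_max_left _ _)
  have hpw : (0:ℝ) < lam ^ n₀ := by positivity
  haveI : Nonempty (Fin (2 * n₀)) := ⟨⟨0, by omega⟩⟩
  -- the truncated words
  set extOm : (Fin (2 * n₀) → Fin m) → Om m :=
    fun w k => w ⟨min k.toNat (2 * n₀ - 1), by have : 1 ≤ n₀ := le_max_right _ _; omega⟩ with hextdef
  have hext : ∀ (w : Fin (2 * n₀) → Fin m) (k : ℕ) (hk : k < 2 * n₀),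
      extOm w (k : ℤ) = w ⟨k, hk⟩ := by
    intro w k hk
    show w ⟨min ((k : ℤ)).toNat (2 * n₀ - 1), _⟩ = w ⟨k, hk⟩
    congr 1
    exact Fin.ext (show min ((k : ℤ)).toNat (2 * n₀ - 1) = k by omega)
  set wS : (w : Fin (2 * n₀) → Fin m) → (L : ℕ) → PES (randComp T (extOm w) (L + 1)) :=
    fun w => wSys baseX (extOm w) with hwSdef
  set I₀ := (Finset.univ : Finset ((Fin (2 * n₀) → Fin m) × Fin (2 * n₀))).sup'
    Finset.univ_nonempty (fun q => (wS q.1 (q.2 : ℕ)).I) with hI₀def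
  set dstar := (Finset.univ : Finset (Fin (2 * n₀) → Fin m)).inf'
    Finset.univ_nonempty (fun w => (wS w (n₀ - 1)).del) with hdstardef
  have hdstar0 : 0 < dstar := by
    rw [hdstardef, Finset.lt_inf'_iff]
    exact fun w _ => (wS w (n₀ - 1)).hdel
  set Imax := max I₀ (2 * Real.exp D2 / dstar) with hImaxdef
  have hImax0 : 0 < Imax := by
    apply lt_of_lt_of_le _ (le_max_right _ _)
    positivity
  have hImaxs : 2 * Real.exp D2 / dstar ≤ Imax := le_max_right _ _
  -- Dd and Lam of word systems
  have hwDd : ∀ (ω : Om m) (L : ℕ), (wSys baseX ω L).Dd ≤ Dmax :=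
    fun ω L => wSys_Dd baseX hbaseL hlam hMb hMb0 ω L
  have hwLam : ∀ (ω : Om m) (L : ℕ), (wSys baseX ω L).Lam = lam ^ (L + 1) :=
    fun ω L => wSys_Lam baseX hbaseL ω L
  -- main induction
  have MAIN : ∀ n : ℕ, 1 ≤ n → ∀ ω : Om m,
      ∃ X : PES (randComp T ω n), lam ≤ X.Lam ∧ X.Dd ≤ D2 ∧ X.I ≤ Imax := by
    intro n
    induction n using Nat.strong_induction_on with
    | _ n IH =>
      intro hn ω
      by_cases hsmall : n < 2 * n₀
      · -- short words: take the word system directly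
        set w : Fin (2 * n₀) → Fin m := fun j => ω ((j : ℕ) : ℤ) with hwdef
        have hagree : ∀ k : ℕ, k < n → extOm w (k : ℤ) = ω (k : ℤ) := by
          intro k hk
          rw [hext w k (by omega)]
        have he : randComp T (extOm w) n = randComp T ω n :=
          randComp_congr T _ _ n (fun k hk => hagree k hk)
        have he2 : randComp T (extOm w) (n - 1 + 1) = randComp T ω n := by
          rw [show n - 1 + 1 = n by omega, he]
        refine ⟨PES.cast he2 (wS w (n - 1)), ?_, ?_, ?_⟩
        · rw [PES.cast_Lam, hwSdef, hwLam]
          calc lam = lam ^ 1 := (pow_one lam).symm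
            _ ≤ lam ^ (n - 1 + 1) := pow_le_pow_right₀ (le_of_lt hlam) (by omega)
        · rw [PES.cast_Dd]
          refine le_trans (hwDd _ _) ?_
          rw [hD2def]
          linarith
        · rw [PES.cast_I]
          refine le_trans ?_ (le_max_left _ _)
          rw [hI₀def]
          have := Finset.le_sup' (f := fun q : (Fin (2 * n₀) → Fin m) × Fin (2 * n₀) =>
            (wS q.1 (q.2 : ℕ)).I) (Finset.mem_univ (w, (⟨n - 1, by omega⟩ : Fin (2 * n₀))))
          exact this
      · -- long words: peel off a block of length n₀
        push_neg at hsmall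
        obtain ⟨XF, hXF1, hXF2, hXF3⟩ := IH (n - n₀) (by omega) (by omega) ω
        set ωs : Om m := fun k => ω (k + ((n - n₀ : ℕ) : ℤ)) with hωsdef
        set w : Fin (2 * n₀) → Fin m := fun j => ωs ((j : ℕ) : ℤ) with hwdef
        set B := wS w (n₀ - 1) with hBdef
        have heB : randComp T (extOm w) (n₀ - 1 + 1) = randComp T ωs n₀ := by
          rw [show n₀ - 1 + 1 = n₀ by omega]
          apply randComp_congr
          intro k hk
          rw [hext w k (by omega)]
        have hcompeq : (randComp T ωs n₀) ∘ (randComp T ω (n - n₀)) = randComp T ω n := by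
          have := (randComp_add T ω (n - n₀) n₀).symm
          rw [show n - n₀ + n₀ = n by omega] at this
          exact this
        have he : (randComp T (extOm w) (n₀ - 1 + 1)) ∘ (randComp T ω (n - n₀)) =
            randComp T ω n := by rw [heB, hcompeq]
        have hBLam : B.Lam = lam ^ n₀ := by
          rw [hBdef, hwSdef, hwLam, show n₀ - 1 + 1 = n₀ by omega]
        have hBDd : B.Dd ≤ Dmax := hwDd _ _
        have hone : (1:ℝ) ≤ lam ^ n₀ := by
          calc (1:ℝ) = 1 ^ n₀ := (one_pow n₀).symm
            _ ≤ lam ^ n₀ := pow_le_pow_left₀ (by norm_num) (le_of_lt hlam) n₀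
        have hDdcomp : B.Dd + XF.Dd / B.Lam ≤ D2 := by
          have h1 : XF.Dd / B.Lam ≤ D2 / 4 := by
            rw [hBLam]
            apply div_le_div₀ hD20 hXF2 (by norm_num) h4
          rw [hD2def] at h1 ⊢
          linarith
        refine ⟨PES.cast he (XF.comp B), ?_, ?_, ?_⟩
        · rw [PES.cast_Lam, PES.comp_Lam, hBLam]
          nlinarith
        · rw [PES.cast_Dd, PES.comp_Dd]
          exact hDdcomp
        · rw [PES.cast_I, PES.comp_I]
          have h1 : 2 / B.Lam * XF.I ≤ Imax / 2 := by
            rw [hBLam]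
            have ha : 2 / lam ^ n₀ * XF.I ≤ 2 / lam ^ n₀ * Imax :=
              mul_le_mul_of_nonneg_left hXF3 (by positivity)
            have hb : 2 / lam ^ n₀ * Imax ≤ 2 / 4 * Imax := by
              apply mul_le_mul_of_nonneg_right _ (le_of_lt hImax0)
              apply div_le_div₀ (by norm_num) (le_refl _) (by norm_num) h4
            linarith
          have h2 : Real.exp (B.Dd + XF.Dd / B.Lam) / B.del ≤ Imax / 2 := by
            have ha : Real.exp (B.Dd + XF.Dd / B.Lam) ≤ Real.exp D2 :=
              Real.exp_le_exp.2 hDdcomp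
            have hb : dstar ≤ B.del := by
              rw [hdstardef, hBdef]
              exact Finset.inf'_le _ (Finset.mem_univ w)
            have hfin := div_le_div₀ (Real.exp_pos D2).le ha hdstar0 hb
            have h2' : Real.exp D2 / dstar ≤ Imax / 2 := by
              rw [div_le_div_iff₀ hdstar0 (by norm_num : (0:ℝ) < 2)]
              rw [div_le_iff₀ hdstar0] at hImaxs
              nlinarith [hdstar0]
            linarith
          linarith
  -- conclusion
  have hCpos : (0:ℝ) < 2 * lam / (lam - 1) * Imax := by
    apply mul_pos _ hImax0
    apply div_pos (by linarith) (by linarith)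
  refine ⟨2 * lam / (lam - 1) * Imax, hCpos, ?_⟩
  intro ω n hn ε hε
  obtain ⟨X, hX1, hX2, hX3⟩ := MAIN n hn ω
  refine le_trans (X.bad_bound hlam hX1 hε) (ENNReal.ofReal_le_ofReal ?_)
  have hfac : (0:ℝ) ≤ 2 * lam / (lam - 1) := by
    apply div_nonneg (by linarith) (by linarith)
  nlinarith [mul_le_mul_of_nonneg_left hX3 hfac, hε]


theorem stmt6 (m : ℕ) (hm : 1 ≤ m) (T : Fin m → ℝ → ℝ) (lam : ℝ) (hlam : 1 < lam)
    (hT : ∀ i, PiecewiseC2Expanding (T i) lam)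
    (hmaps : ∀ i, Set.MapsTo (T i) (Set.Icc 0 1) (Set.Icc 0 1)) :
    ∃ C : ℝ, 0 < C ∧ ∀ (ω : Om m) (n : ℕ), 1 ≤ n → ∀ ε : ℝ, 0 < ε →
      mLeb {x | |randComp T ω n x - x| ≤ ε} ≤ ENNReal.ofReal (C * ε) := by
  obtain ⟨C, hC, hbound⟩ := stmt6Aux m hm T lam hlam hT hmaps
  exact ⟨C, hC, hbound⟩
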